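/- arXiv:0910.2886 — 4 statements merged into one kernel-verified Lean document; each statement's English description precedes it below -/
import Mathlib

section
/- Let f : [0,1]×ℝ²→ℝ be continuous, let ω ∈ C₀ and let u ∈ C¹₀. Then u satisfies u'(t) + ∫₀ᵗ f(s, u(s), u'(s)) ds = u'(0) + ω(t) for all t ∈ [0,1] if and only if u satisfies the integral equation u(t) = ∫₀¹ K(t,s) f(s, u(s), u'(s)) ds + Y_t(ω) for all t ∈ [0,1]. -/
open MeasureTheory

/-- The Green's function of `-d²/dt²` with Dirichlet boundary conditions. -/
noncomputable def Kgreen (t s : ℝ) : ℝ := min t s - t * s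

/-- `Y_t(ω) = -t ∫₀¹ ω(s) ds + ∫₀ᵗ ω(s) ds`. -/
noncomputable def Yw (ω : ℝ → ℝ) (t : ℝ) : ℝ :=
  -t * (∫ s in (0:ℝ)..1, ω s) + ∫ s in (0:ℝ)..t, ω s


lemma ftcDeriv (G : ℝ → ℝ) (hG : Continuous G) (b : ℝ) :
    HasDerivAt (fun r => ∫ x in (0:ℝ)..r, G x) (G b) b :=
  (hG.integral_hasStrictDerivAt 0 b).hasDerivAt

lemma partsLem (G : ℝ → ℝ) (hG : Continuous G) (t : ℝ) :
    (∫ s in (0:ℝ)..t, (∫ x in (0:ℝ)..s, G x)) = ∫ s in (0:ℝ)..t, (t - s) * G s := by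
  have h := intervalIntegral.integral_mul_deriv_eq_deriv_mul
    (u := fun s => ∫ x in (0:ℝ)..s, G x) (u' := G) (v := fun s => s - t) (v' := fun _ => 1)
    (a := 0) (b := t)
    (fun x _ => ftcDeriv G hG x)
    (fun x _ => (hasDerivAt_id x).sub_const t)
    (hG.intervalIntegrable (μ := volume) 0 t) (continuous_const.intervalIntegrable (μ := volume) 0 t)
  simp only [mul_one, sub_self, mul_zero, intervalIntegral.integral_same, zero_mul,
    zero_sub, mul_neg, sub_zero, zero_add, neg_zero] at h
  rw [h, ← intervalIntegral.integral_neg]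
  exact intervalIntegral.integral_congr fun s _ => by ring

lemma keyK (G : ℝ → ℝ) (hG : Continuous G) {t : ℝ} (ht : t ∈ Set.Icc (0:ℝ) 1) :
    (∫ s in (0:ℝ)..1, (min t s - t * s) * G s)
      = t * (∫ s in (0:ℝ)..1, (1 - s) * G s) - ∫ s in (0:ℝ)..t, (t - s) * G s := by
  obtain ⟨h0, h1⟩ := ht
  have cK : Continuous fun s => (min t s - t * s) * G s :=
    ((continuous_const.min continuous_id).sub (continuous_const.mul continuous_id)).mul hG
  have cL : Continuous fun s => (1 - s) * G s :=
    ((continuous_const.sub continuous_id).mul hG)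
  have cM : Continuous fun s => (t - s) * G s :=
    ((continuous_const.sub continuous_id).mul hG)
  have s1 := (intervalIntegral.integral_add_adjacent_intervals
    (cK.intervalIntegrable (μ := volume) 0 t) (cK.intervalIntegrable (μ := volume) t 1))
  have s2 := (intervalIntegral.integral_add_adjacent_intervals
    (cL.intervalIntegrable (μ := volume) 0 t) (cL.intervalIntegrable (μ := volume) t 1))
  have c1 : (∫ s in (0:ℝ)..t, (min t s - t * s) * G s)
      = ∫ s in (0:ℝ)..t, (t * ((1 - s) * G s) - (t - s) * G s) := by
    apply intervalIntegral.integral_congr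
    intro s hs
    rw [Set.uIcc_of_le h0] at hs
    show (min t s - t * s) * G s = t * ((1 - s) * G s) - (t - s) * G s
    rw [min_eq_right hs.2]; ring
  have c2 : (∫ s in t..1, (min t s - t * s) * G s)
      = ∫ s in t..1, t * ((1 - s) * G s) := by
    apply intervalIntegral.integral_congr
    intro s hs
    rw [Set.uIcc_of_le h1] at hs
    show (min t s - t * s) * G s = t * ((1 - s) * G s)
    rw [min_eq_left hs.1]; ring
  have c3 : (∫ s in (0:ℝ)..t, (t * ((1 - s) * G s) - (t - s) * G s))
      = t * (∫ s in (0:ℝ)..t, (1 - s) * G s) - ∫ s in (0:ℝ)..t, (t - s) * G s := by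
    rw [intervalIntegral.integral_sub ((show Continuous fun s => t * ((1 - s) * G s) from continuous_const.mul cL).intervalIntegrable (μ := volume) 0 t)
      (cM.intervalIntegrable (μ := volume) 0 t), intervalIntegral.integral_const_mul]
  have c4 : (∫ s in t..1, t * ((1 - s) * G s)) = t * ∫ s in t..1, (1 - s) * G s :=
    intervalIntegral.integral_const_mul _ _
  rw [← s1, ← s2, c1, c2, c3, c4]
  ring
/-- equivalence of the integral formulation and the Green's-function
integral equation. -/
theorem stmt1 (f : ℝ → ℝ → ℝ → ℝ)
    (hf : ContinuousOn (fun p : ℝ × ℝ × ℝ => f p.1 p.2.1 p.2.2)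
      (Set.Icc 0 1 ×ˢ (Set.univ : Set (ℝ × ℝ))))
    (ω : ℝ → ℝ) (hω : ContinuousOn ω (Set.Icc 0 1)) (hω0 : ω 0 = 0)
    (u u' : ℝ → ℝ)
    (hu : ∀ t ∈ Set.Icc (0:ℝ) 1, HasDerivWithinAt u (u' t) (Set.Icc 0 1) t)
    (hu'c : ContinuousOn u' (Set.Icc 0 1))
    (hu0 : u 0 = 0) (hu1 : u 1 = 0) :
    (∀ t ∈ Set.Icc (0:ℝ) 1,
        u' t + ∫ s in (0:ℝ)..t, f s (u s) (u' s) = u' 0 + ω t)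
    ↔ (∀ t ∈ Set.Icc (0:ℝ) 1,
        u t = (∫ s in (0:ℝ)..1, Kgreen t s * f s (u s) (u' s)) + Yw ω t) := by
  -- clamp function
  set cl : ℝ → ℝ := fun x => max 0 (min x 1) with hcl_def
  have hclc : Continuous cl := continuous_const.max (continuous_id.min continuous_const)
  have hclmem : ∀ x, cl x ∈ Set.Icc (0:ℝ) 1 :=
    fun x => ⟨le_max_left _ _, max_le (by norm_num) (min_le_right _ _)⟩
  have hcl : ∀ x ∈ Set.Icc (0:ℝ) 1, cl x = x := by
    intro x hx
    simp only [hcl_def]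
    rw [min_eq_left hx.2, max_eq_right hx.1]
  have huc : ContinuousOn u (Set.Icc (0:ℝ) 1) := fun x hx => (hu x hx).continuousWithinAt
  have hg : ContinuousOn (fun s => f s (u s) (u' s)) (Set.Icc (0:ℝ) 1) :=
    hf.comp (continuousOn_id.prodMk (huc.prodMk hu'c)) fun s hs => ⟨hs, trivial⟩
  set G : ℝ → ℝ := fun x => f (cl x) (u (cl x)) (u' (cl x)) with hG_def
  have hGc : Continuous G := hg.comp_continuous hclc hclmem
  set W : ℝ → ℝ := fun x => ω (cl x) with hW_def
  have hWc : Continuous W := hω.comp_continuous hclc hclmem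
  have hW0 : W 0 = 0 := by
    simp only [hW_def]
    rw [hcl 0 ⟨le_rfl, by norm_num⟩, hω0]
  -- congruences between original integrals and extended ones
  have hgG : ∀ r ∈ Set.Icc (0:ℝ) 1,
      (∫ s in (0:ℝ)..r, f s (u s) (u' s)) = ∫ s in (0:ℝ)..r, G s := by
    intro r hr
    apply intervalIntegral.integral_congr
    intro s hs
    rw [Set.uIcc_of_le hr.1] at hs
    simp only [hG_def]
    rw [hcl s ⟨hs.1, hs.2.trans hr.2⟩]
  have hωW : ∀ r ∈ Set.Icc (0:ℝ) 1,
      (∫ s in (0:ℝ)..r, ω s) = ∫ s in (0:ℝ)..r, W s := by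
    intro r hr
    apply intervalIntegral.integral_congr
    intro s hs
    rw [Set.uIcc_of_le hr.1] at hs
    simp only [hW_def]
    rw [hcl s ⟨hs.1, hs.2.trans hr.2⟩]
  have hωWpt : ∀ r ∈ Set.Icc (0:ℝ) 1, ω r = W r := by
    intro r hr; simp only [hW_def]; rw [hcl r hr]
  set C : ℝ := ∫ s in (0:ℝ)..1, (1 - s) * G s with hC_def
  set B : ℝ := ∫ s in (0:ℝ)..1, W s with hB_def
  have hYw : ∀ r ∈ Set.Icc (0:ℝ) 1, Yw ω r = -r * B + ∫ s in (0:ℝ)..r, W s := by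
    intro r hr
    rw [Yw, hωW 1 ⟨by norm_num, le_rfl⟩, hωW r hr]
  have hKint : ∀ r ∈ Set.Icc (0:ℝ) 1,
      (∫ s in (0:ℝ)..1, Kgreen r s * f s (u s) (u' s))
        = ∫ s in (0:ℝ)..1, (min r s - r * s) * G s := by
    intro r hr
    apply intervalIntegral.integral_congr
    intro s hs
    rw [Set.uIcc_of_le (by norm_num : (0:ℝ) ≤ 1)] at hs
    simp only [hG_def, Kgreen]
    rw [hcl s hs]
  have hEc : Continuous fun r => ∫ x in (0:ℝ)..r, G x :=
    continuous_iff_continuousAt.mpr fun r => (ftcDeriv G hGc r).continuousAt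
  constructor
  · -- forward
    intro hyp
    have hFTC : ∀ r ∈ Set.Icc (0:ℝ) 1, (∫ s in (0:ℝ)..r, u' s) = u r := by
      intro r hr
      have := intervalIntegral.integral_eq_sub_of_hasDeriv_right_of_le hr.1
        (huc.mono (Set.Icc_subset_Icc le_rfl hr.2))
        (fun x hx => by
          have hx' : x ∈ Set.Icc (0:ℝ) 1 := ⟨le_of_lt hx.1, (le_of_lt (hx.2.trans_le hr.2))⟩
          exact (hu x hx').mono_of_mem_nhdsWithin
            (mem_nhdsWithin_of_mem_nhds (Icc_mem_nhds hx.1 (hx.2.trans_le hr.2))))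
        ((hu'c.mono (by rw [Set.uIcc_of_le hr.1]; exact Set.Icc_subset_Icc le_rfl hr.2)).intervalIntegrable)
      rw [this, hu0, sub_zero]
    have hrep : ∀ r ∈ Set.Icc (0:ℝ) 1,
        u r = u' 0 * r + (∫ s in (0:ℝ)..r, W s) - ∫ s in (0:ℝ)..r, (∫ x in (0:ℝ)..s, G x) := by
      intro r hr
      have h2 : (∫ s in (0:ℝ)..r, u' s)
          = ∫ s in (0:ℝ)..r, (u' 0 + W s - ∫ x in (0:ℝ)..s, G x) := by
        apply intervalIntegral.integral_congr
        intro s hs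
        rw [Set.uIcc_of_le hr.1] at hs
        have hs' : s ∈ Set.Icc (0:ℝ) 1 := ⟨hs.1, hs.2.trans hr.2⟩
        have := hyp s hs'
        rw [hgG s hs', hωWpt s hs'] at this
        show u' s = u' 0 + W s - ∫ x in (0:ℝ)..s, G x
        linarith
      have h3 : (∫ s in (0:ℝ)..r, (u' 0 + W s - ∫ x in (0:ℝ)..s, G x))
          = u' 0 * r + (∫ s in (0:ℝ)..r, W s) - ∫ s in (0:ℝ)..r, (∫ x in (0:ℝ)..s, G x) := by
        rw [intervalIntegral.integral_sub ((show Continuous fun s => u' 0 + W s from continuous_const.add hWc).intervalIntegrable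
              (μ := volume) 0 r) (hEc.intervalIntegrable (μ := volume) 0 r),
          intervalIntegral.integral_add (continuous_const.intervalIntegrable (μ := volume) 0 r)
            (hWc.intervalIntegrable (μ := volume) 0 r),
          intervalIntegral.integral_const]
        simp [mul_comm]
      rw [← hFTC r hr, h2, h3]
    have h10 : u' 0 = C - B := by
      have h1 := hrep 1 ⟨by norm_num, le_rfl⟩
      rw [hu1, partsLem G hGc 1] at h1
      have : (∫ s in (0:ℝ)..1, (1 - s) * G s) = C := rfl
      linarith [h1]
    intro t ht
    rw [hKint t ht, keyK G hGc ht, hYw t ht, hrep t ht, h10, partsLem G hGc t]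
    ring
  · -- backward
    intro hyp
    have huv : ∀ r ∈ Set.Icc (0:ℝ) 1,
        u r = r * C - (r * (∫ x in (0:ℝ)..r, G x) - ∫ s in (0:ℝ)..r, s * G s)
            + (-(r * B) + ∫ s in (0:ℝ)..r, W s) := by
      intro r hr
      have h1 := hyp r hr
      rw [hKint r hr, keyK G hGc hr, hYw r hr] at h1
      have h2 : (∫ s in (0:ℝ)..r, (r - s) * G s)
          = r * (∫ x in (0:ℝ)..r, G x) - ∫ s in (0:ℝ)..r, s * G s := by
        have : (∫ s in (0:ℝ)..r, (r - s) * G s)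
            = ∫ s in (0:ℝ)..r, (r * G s - s * G s) :=
          intervalIntegral.integral_congr fun s _ => by ring
        have i1 : IntervalIntegrable (fun s => r * G s) volume 0 r :=
          (continuous_const.mul hGc).intervalIntegrable 0 r
        have i2 : IntervalIntegrable (fun s : ℝ => s * G s) volume 0 r :=
          (continuous_id.mul hGc).intervalIntegrable 0 r
        rw [this, intervalIntegral.integral_sub i1 i2, intervalIntegral.integral_const_mul]
      rw [h1, h2]; ring
    have hv : ∀ r : ℝ, HasDerivAt
        (fun r => r * C - (r * (∫ x in (0:ℝ)..r, G x) - ∫ s in (0:ℝ)..r, s * G s)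
            + (-(r * B) + ∫ s in (0:ℝ)..r, W s))
        (C - (∫ x in (0:ℝ)..r, G x) - B + W r) r := by
      intro r
      have d1 : HasDerivAt (fun r : ℝ => r * C) C r := by
        simpa using (hasDerivAt_id r).mul_const C
      have d2 : HasDerivAt (fun r => r * ∫ x in (0:ℝ)..r, G x)
          ((∫ x in (0:ℝ)..r, G x) + r * G r) r := by
        exact ((hasDerivAt_id' r).mul (ftcDeriv G hGc r)).congr_deriv (by ring)
      have d3 : HasDerivAt (fun r => ∫ s in (0:ℝ)..r, s * G s) (r * G r) r :=
        ftcDeriv _ (continuous_id.mul hGc) r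
      have d4 : HasDerivAt (fun r => ∫ s in (0:ℝ)..r, W s) (W r) r := ftcDeriv W hWc r
      have d5 : HasDerivAt (fun r : ℝ => -(r * B)) (-B) r := by
        exact ((hasDerivAt_id' r).mul_const B).neg.congr_deriv (by ring)
      have := (d1.sub (d2.sub d3)).add (d5.add d4)
      exact this.congr_deriv (by ring)
    have hud : ∀ r ∈ Set.Icc (0:ℝ) 1,
        u' r = C - (∫ x in (0:ℝ)..r, G x) - B + W r := by
      intro r hr
      have hUD : UniqueDiffWithinAt ℝ (Set.Icc (0:ℝ) 1) r :=
        (uniqueDiffOn_Icc zero_lt_one) r hr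
      have h1 : HasDerivWithinAt u (C - (∫ x in (0:ℝ)..r, G x) - B + W r)
          (Set.Icc (0:ℝ) 1) r :=
        ((hv r).hasDerivWithinAt).congr (fun x hx => huv x hx) (huv r hr)
      rw [← (hu r hr).derivWithin hUD, h1.derivWithin hUD]
    intro t ht
    rw [hgG t ht, hωWpt t ht]
    have e0 := hud 0 ⟨le_rfl, by norm_num⟩
    rw [intervalIntegral.integral_same, hW0] at e0
    have et := hud t ht
    linarith
end

section
/- Let f : [0,1]×ℝ→ℝ be continuous and differentiable with respect to its second argument, and suppose there exist an integer m ≥ 0 and real constants h, k with π²m² < h ≤ ∂f/∂x(t,x) ≤ k < π²(m+1)² for all t ∈ [0,1] and x ∈ ℝ. Then for every ω ∈ C₀ there exists a unique u ∈ C¹₀ satisfying u'(t) + ∫₀ᵗ f(s, u(s)) ds = u'(0) + ω(t) for all t ∈ [0,1]. -/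
open MeasureTheory

/-- `u ∈ C¹₀` (with derivative `u'`) solves the integral equation
`u'(t) + ∫₀ᵗ f(s,u) ds = u'(0) + ω(t)` on `[0,1]`. -/
def SolBVP1 (f : ℝ → ℝ → ℝ) (ω : ℝ → ℝ) (u u' : ℝ → ℝ) : Prop :=
  (∀ t ∈ Set.Icc (0:ℝ) 1, HasDerivWithinAt u (u' t) (Set.Icc 0 1) t) ∧
  ContinuousOn u' (Set.Icc 0 1) ∧ u 0 = 0 ∧ u 1 = 0 ∧
  ∀ t ∈ Set.Icc (0:ℝ) 1,
    u' t + ∫ s in (0:ℝ)..t, f s (u s) = u' 0 + ω t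
open MeasureTheory Real Set intervalIntegral

namespace BVP1

lemma ftc {f : ℝ → ℝ} (hf : Continuous f) (b : ℝ) :
    HasDerivAt (fun t => ∫ s in (0:ℝ)..t, f s) (f b) b :=
  intervalIntegral.integral_hasDerivAt_right (hf.intervalIntegrable _ _)
    (hf.stronglyMeasurableAtFilter _ _) hf.continuousAt

noncomputable def cl (t : ℝ) : ℝ := max 0 (min 1 t)

lemma cl_mem (t : ℝ) : cl t ∈ Icc (0:ℝ) 1 := by
  constructor
  · exact le_max_left _ _
  · simp [cl]
lemma cl_continuous : Continuous cl := by
  unfold cl; fun_prop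
lemma cl_eq_self {t : ℝ} (ht : t ∈ Icc (0:ℝ) 1) : cl t = t := by
  obtain ⟨h1, h2⟩ := ht
  simp [cl, min_eq_right h2, max_eq_right h1]

lemma integral_cos_int_pi {j : ℤ} (hj : (j:ℝ) ≠ 0) :
    ∫ t in (0:ℝ)..1, Real.cos ((j:ℝ) * π * t) = 0 := by
  have hπ : (j:ℝ) * π ≠ 0 := mul_ne_zero hj Real.pi_ne_zero
  have := intervalIntegral.integral_comp_mul_left (a := 0) (b := 1) Real.cos hπ
  rw [this]
  simp [integral_cos, Real.sin_int_mul_pi]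

lemma sin_orth {n kk : ℕ} (hn : 1 ≤ n) (hk : 1 ≤ kk) :
    ∫ t in (0:ℝ)..1, Real.sin ((n:ℝ) * π * t) * Real.sin ((kk:ℝ) * π * t)
      = if n = kk then 1/2 else 0 := by
  have key : ∀ t : ℝ, Real.sin ((n:ℝ) * π * t) * Real.sin ((kk:ℝ) * π * t)
      = Real.cos ((((n:ℤ) - kk : ℤ):ℝ) * π * t) / 2 - Real.cos ((((n:ℤ) + kk : ℤ):ℝ) * π * t) / 2 := by
    intro t
    push_cast
    rw [show ((n:ℝ) - kk) * π * t = (n:ℝ)*π*t - (kk:ℝ)*π*t from by ring,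
        show ((n:ℝ) + kk) * π * t = (n:ℝ)*π*t + (kk:ℝ)*π*t from by ring,
        Real.cos_sub, Real.cos_add]
    ring
  have ic : ∀ j : ℤ, IntervalIntegrable (fun t => Real.cos ((j:ℝ) * π * t) / 2) volume 0 1 :=
    fun j => ((Real.continuous_cos.comp (by fun_prop)).div_const 2).intervalIntegrable _ _
  simp_rw [key]
  rw [intervalIntegral.integral_sub (ic _) (ic _), intervalIntegral.integral_div,
      intervalIntegral.integral_div]
  have hsum : (((n:ℤ) + kk : ℤ):ℝ) ≠ 0 := by
    have h1 : (1:ℝ) ≤ (n:ℝ) := by exact_mod_cast hn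
    have h2 : (0:ℝ) ≤ (kk:ℝ) := by positivity
    push_cast
    nlinarith
  rw [integral_cos_int_pi hsum]
  by_cases h : n = kk
  · subst h
    simp
  · have hd : (((n:ℤ) - kk : ℤ):ℝ) ≠ 0 := by
      push_cast
      intro hc
      exact h (by exact_mod_cast sub_eq_zero.mp hc)
    rw [integral_cos_int_pi hd]
    simp [h]

end BVP1

namespace BVP1

noncomputable def es (n : ℕ) (t : ℝ) : ℝ := Real.sqrt 2 * Real.sin ((n:ℝ) * π * t)

lemma es_continuous (n : ℕ) : Continuous (es n) := by unfold es; fun_prop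

lemma es_orth {n kk : ℕ} (hn : 1 ≤ n) (hk : 1 ≤ kk) :
    ∫ t in (0:ℝ)..1, es n t * es kk t = if n = kk then 1 else 0 := by
  have key : ∀ t : ℝ, es n t * es kk t
      = 2 * (Real.sin ((n:ℝ) * π * t) * Real.sin ((kk:ℝ) * π * t)) := by
    intro t
    have h2 : Real.sqrt 2 * Real.sqrt 2 = 2 := Real.mul_self_sqrt (by norm_num)
    unfold es
    linear_combination (Real.sin ((n:ℝ) * π * t) * Real.sin ((kk:ℝ) * π * t)) * h2
  simp_rw [key]
  rw [intervalIntegral.integral_const_mul, sin_orth hn hk]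
  by_cases h : n = kk <;> simp [h]

lemma hasDerivAt_sin_n (n : ℕ) (t : ℝ) :
    HasDerivAt (fun t => Real.sin ((n:ℝ) * π * t)) ((n:ℝ) * π * Real.cos ((n:ℝ) * π * t)) t := by
  have h1 : HasDerivAt (fun t : ℝ => (n:ℝ) * π * t) ((n:ℝ) * π) t := by
    simpa using (hasDerivAt_id t).const_mul ((n:ℝ) * π)
  simpa [mul_comm] using h1.sin

lemma hasDerivAt_cos_n (n : ℕ) (t : ℝ) :
    HasDerivAt (fun t => Real.cos ((n:ℝ) * π * t)) (-((n:ℝ) * π * Real.sin ((n:ℝ) * π * t))) t := by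
  have h1 : HasDerivAt (fun t : ℝ => (n:ℝ) * π * t) ((n:ℝ) * π) t := by
    simpa using (hasDerivAt_id t).const_mul ((n:ℝ) * π)
  simpa [mul_comm] using h1.cos

lemma parts {w w' w'' : ℝ → ℝ} (hw : ∀ t, HasDerivAt w (w' t) t)
    (hw' : ∀ t, HasDerivAt w' (w'' t) t) (hc : Continuous w'')
    (h0 : w 0 = 0) (h1 : w 1 = 0) (n : ℕ) :
    ∫ t in (0:ℝ)..1, w'' t * Real.sin ((n:ℝ) * π * t)
      = -((n:ℝ) * π)^2 * ∫ t in (0:ℝ)..1, w t * Real.sin ((n:ℝ) * π * t) := by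
  have hwc : Continuous w := continuous_iff_continuousAt.2 fun t => (hw t).continuousAt
  have hw'c : Continuous w' := continuous_iff_continuousAt.2 fun t => (hw' t).continuousAt
  have hsinc : Continuous (fun t => Real.sin ((n:ℝ) * π * t)) := by fun_prop
  have hcosc : Continuous (fun t => (n:ℝ) * π * Real.cos ((n:ℝ) * π * t)) := by fun_prop
  have A := intervalIntegral.integral_mul_deriv_eq_deriv_mul
    (u := fun t => Real.sin ((n:ℝ) * π * t)) (u' := fun t => (n:ℝ) * π * Real.cos ((n:ℝ) * π * t))
    (v := w') (v' := w'') (a := 0) (b := 1)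
    (fun x _ => hasDerivAt_sin_n n x) (fun x _ => hw' x)
    (hcosc.intervalIntegrable _ _) (hc.intervalIntegrable _ _)
  have B := intervalIntegral.integral_mul_deriv_eq_deriv_mul
    (u := fun t => (n:ℝ) * π * Real.cos ((n:ℝ) * π * t))
    (u' := fun t => -((n:ℝ) * π)^2 * Real.sin ((n:ℝ) * π * t))
    (v := w) (v' := w') (a := 0) (b := 1)
    (fun x _ => by
      have := (hasDerivAt_cos_n n x).const_mul ((n:ℝ) * π)
      convert this using 1
      ring)
    (fun x _ => hw x)
    (((by fun_prop : Continuous (fun t => -((n:ℝ) * π)^2 * Real.sin ((n:ℝ) * π * t)))).intervalIntegrable _ _)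
    (hw'c.intervalIntegrable _ _)
  rw [h1, h0] at B
  have C : ∫ t in (0:ℝ)..1, -((n:ℝ) * π)^2 * Real.sin ((n:ℝ) * π * t) * w t
      = -((n:ℝ) * π)^2 * ∫ t in (0:ℝ)..1, Real.sin ((n:ℝ) * π * t) * w t := by
    simp_rw [mul_assoc]
    exact intervalIntegral.integral_const_mul _ _
  simp_rw [show ∀ t, w'' t * Real.sin ((n:ℝ)*π*t) = Real.sin ((n:ℝ)*π*t) * w'' t
      from fun t => mul_comm _ _,
    show ∀ t, w t * Real.sin ((n:ℝ)*π*t) = Real.sin ((n:ℝ)*π*t) * w t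
      from fun t => mul_comm _ _]
  rw [A, B, C]
  rw [show (n:ℝ) * π * 1 = (n:ℝ) * π by ring]
  simp [Real.sin_nat_mul_pi]

end BVP1

namespace BVP1

lemma expand_sq {g : ℝ → ℝ} (hg : Continuous g) (N : ℕ) (q : ℕ → ℝ) :
    ∫ t in (0:ℝ)..1, (g t - ∑ n ∈ Finset.Icc 1 N, q n * es n t)^2
      = (∫ t in (0:ℝ)..1, (g t)^2)
        - 2 * ∑ n ∈ Finset.Icc 1 N, q n * (∫ t in (0:ℝ)..1, g t * es n t)
        + ∑ n ∈ Finset.Icc 1 N, (q n)^2 := by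
  set s := Finset.Icc 1 N with hs
  have hp : Continuous (fun t => ∑ n ∈ s, q n * es n t) := by
    apply continuous_finset_sum
    intro n _
    exact continuous_const.mul (es_continuous n)
  have step1 : ∀ t : ℝ, (g t - ∑ n ∈ s, q n * es n t)^2
      = (g t)^2 - 2 * (g t * ∑ n ∈ s, q n * es n t) + (∑ n ∈ s, q n * es n t)^2 := by
    intro t; ring
  simp_rw [step1]
  rw [intervalIntegral.integral_add (f := fun t => g t ^ 2 - 2 * (g t * ∑ n ∈ s, q n * es n t))
      (g := fun t => (∑ n ∈ s, q n * es n t) ^ 2)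
      (((hg.pow 2).sub (continuous_const.mul (hg.mul hp))).intervalIntegrable _ _)
      ((hp.pow 2).intervalIntegrable _ _),
    intervalIntegral.integral_sub (f := fun t => g t ^ 2) (g := fun t => 2 * (g t * ∑ n ∈ s, q n * es n t))
      ((hg.pow 2).intervalIntegrable _ _)
      ((continuous_const.mul (hg.mul hp)).intervalIntegrable _ _),
    intervalIntegral.integral_const_mul]
  have hgp : ∫ t in (0:ℝ)..1, g t * ∑ n ∈ s, q n * es n t
      = ∑ n ∈ s, q n * (∫ t in (0:ℝ)..1, g t * es n t) := by
    simp_rw [Finset.mul_sum]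
    rw [intervalIntegral.integral_finset_sum (f := fun n t => g t * (q n * es n t)) (fun n _ =>
      ((hg.mul (continuous_const.mul (es_continuous n))).intervalIntegrable _ _))]
    apply Finset.sum_congr rfl
    intro n _
    rw [show (fun t => g t * (q n * es n t)) = (fun t => q n * (g t * es n t)) from
      funext fun t => by ring]
    exact intervalIntegral.integral_const_mul _ _
  have hpp : ∫ t in (0:ℝ)..1, (∑ n ∈ s, q n * es n t)^2 = ∑ n ∈ s, (q n)^2 := by
    simp_rw [sq, Finset.sum_mul_sum]
    rw [intervalIntegral.integral_finset_sum (fun n _ => by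
      apply Continuous.intervalIntegrable
      apply continuous_finset_sum
      intro kk _
      exact (continuous_const.mul (es_continuous n)).mul (continuous_const.mul (es_continuous kk)))]
    have inner : ∀ n ∈ s, (∫ t in (0:ℝ)..1, ∑ kk ∈ s, (q n * es n t) * (q kk * es kk t))
        = q n * q n := by
      intro n hn
      rw [intervalIntegral.integral_finset_sum (f := fun kk t => q n * es n t * (q kk * es kk t)) (fun kk _ =>
        ((continuous_const.mul (es_continuous n)).mul (continuous_const.mul (es_continuous kk))).intervalIntegrable _ _)]
      have hn1 : 1 ≤ n := (Finset.mem_Icc.mp hn).1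
      have term : ∀ kk ∈ s, (∫ t in (0:ℝ)..1, (q n * es n t) * (q kk * es kk t))
          = if n = kk then q n * q kk else 0 := by
        intro kk hkk
        have hk1 : 1 ≤ kk := (Finset.mem_Icc.mp hkk).1
        rw [show (fun t => (q n * es n t) * (q kk * es kk t))
            = (fun t => (q n * q kk) * (es n t * es kk t)) from funext fun t => by ring]
        rw [intervalIntegral.integral_const_mul, es_orth hn1 hk1]
        by_cases h : n = kk <;> simp [h]
      rw [Finset.sum_congr rfl term]
      simp [Finset.sum_ite_eq, hn]
    rw [Finset.sum_congr rfl inner]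
  rw [hgp, hpp]

lemma bessel {g : ℝ → ℝ} (hg : Continuous g) (N : ℕ) :
    ∑ n ∈ Finset.Icc 1 N, (∫ t in (0:ℝ)..1, g t * es n t)^2 ≤ ∫ t in (0:ℝ)..1, (g t)^2 := by
  have h0 : (0:ℝ) ≤ ∫ t in (0:ℝ)..1, (g t - ∑ n ∈ Finset.Icc 1 N,
      (∫ u in (0:ℝ)..1, g u * es n u) * es n t)^2 :=
    intervalIntegral.integral_nonneg (by norm_num) (fun t _ => sq_nonneg _)
  rw [expand_sq hg N _] at h0
  simp_rw [sq] at h0 ⊢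
  linarith

lemma best_approx {g : ℝ → ℝ} (hg : Continuous g) (N : ℕ) (q : ℕ → ℝ) :
    (∫ t in (0:ℝ)..1, (g t)^2) - ∑ n ∈ Finset.Icc 1 N, (∫ t in (0:ℝ)..1, g t * es n t)^2
      ≤ ∫ t in (0:ℝ)..1, (g t - ∑ n ∈ Finset.Icc 1 N, q n * es n t)^2 := by
  rw [expand_sq hg N q]
  set b : ℕ → ℝ := fun n => ∫ t in (0:ℝ)..1, g t * es n t with hb
  have key : (0:ℝ) ≤ ∑ n ∈ Finset.Icc 1 N, (q n - b n)^2 :=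
    Finset.sum_nonneg fun n _ => sq_nonneg _
  have hid : ∑ n ∈ Finset.Icc 1 N, (q n - b n)^2
      = ∑ n ∈ Finset.Icc 1 N, (q n)^2 - 2 * ∑ n ∈ Finset.Icc 1 N, (q n * b n)
        + ∑ n ∈ Finset.Icc 1 N, (b n)^2 := by
    simp only [sub_sq]
    rw [Finset.sum_add_distrib, Finset.sum_sub_distrib, Finset.mul_sum]
    ring_nf
  rw [hid] at key
  linarith

end BVP1

namespace BVP1

noncomputable def oddExt (w : ℝ → ℝ) (t : ℝ) : ℝ := w (cl t) - w (cl (-t))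

lemma oddExt_continuous {w : ℝ → ℝ} (hw : Continuous w) : Continuous (oddExt w) := by
  unfold oddExt
  exact (hw.comp cl_continuous).sub ((hw.comp cl_continuous).comp continuous_neg)

lemma cl_of_nonpos {t : ℝ} (ht : t ≤ 0) : cl t = 0 := by
  unfold cl
  rw [min_eq_right (ht.trans zero_le_one), max_eq_left ht]

lemma cl_of_ge_one {t : ℝ} (ht : 1 ≤ t) : cl t = 1 := by
  unfold cl
  rw [min_eq_left ht, max_eq_right zero_le_one]

lemma oddExt_eq {w : ℝ → ℝ} (h0 : w 0 = 0) {t : ℝ} (ht : t ∈ Icc (0:ℝ) 1) :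
    oddExt w t = w t := by
  unfold oddExt
  rw [cl_eq_self ht, cl_of_nonpos (by linarith [ht.1]), h0, sub_zero]

lemma oddExt_neg (w : ℝ → ℝ) (t : ℝ) : oddExt w (-t) = - oddExt w t := by
  unfold oddExt; rw [neg_neg]; ring

lemma exp_sub_exp_neg (θ : ℝ) :
    Complex.exp ((θ:ℂ) * Complex.I) - Complex.exp (((-θ : ℝ):ℂ) * Complex.I)
      = 2 * Complex.sin (θ:ℂ) * Complex.I := by
  push_cast
  rw [Complex.exp_mul_I, Complex.exp_mul_I, Complex.cos_neg, Complex.sin_neg]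
  ring

lemma reindex (s : Finset ℤ) (γ : ℤ → ℝ) :
    ∃ (N : ℕ) (q : ℕ → ℝ), ∀ t : ℝ,
      ∑ j ∈ Finset.Icc 1 N, q j * Real.sin ((j:ℝ) * π * t)
        = ∑ n ∈ s, γ n * Real.sin (π * (n:ℝ) * t) := by
  refine ⟨1 + s.sup Int.natAbs,
    fun j => ∑ n ∈ s, (if n.natAbs = j then (if n < 0 then -γ n else γ n) else 0), fun t => ?_⟩
  set N := 1 + s.sup Int.natAbs with hN
  have hswap : ∀ j ∈ Finset.Icc 1 N,
      (fun j => ∑ n ∈ s, (if n.natAbs = j then (if n < 0 then -γ n else γ n) else 0)) j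
        * Real.sin ((j:ℝ) * π * t)
      = ∑ n ∈ s, (if n.natAbs = j then (if n < 0 then -γ n else γ n) * Real.sin ((j:ℝ) * π * t) else 0) := by
    intro j _
    simp only
    rw [Finset.sum_mul]
    apply Finset.sum_congr rfl
    intro n _
    rw [ite_mul, zero_mul]
  rw [Finset.sum_congr rfl hswap]
  ·
    rw [Finset.sum_comm]
    apply Finset.sum_congr rfl
    intro n hn
    rw [Finset.sum_ite_eq (Finset.Icc 1 N) n.natAbs
      (fun j => (if n < 0 then -γ n else γ n) * Real.sin ((j:ℝ) * π * t))]
    by_cases h : n = 0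
    · subst h
      simp
    · have hge : 1 ≤ n.natAbs := by
        omega
      have hle : n.natAbs ≤ N := by
        rw [hN]
        have := Finset.le_sup (f := Int.natAbs) hn
        omega
      rw [if_pos (Finset.mem_Icc.mpr ⟨hge, hle⟩)]
      rcases lt_trichotomy n 0 with hlt | heq | hgt
      · rw [if_pos hlt]
        have hcast : ((n.natAbs : ℕ) : ℝ) = -(n:ℝ) := by
          rw [Nat.cast_natAbs, abs_of_neg hlt, Int.cast_neg]
        rw [hcast, show (-(n:ℝ)) * π * t = -((n:ℝ) * π * t) from by ring, Real.sin_neg]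
        rw [show π * (n:ℝ) * t = (n:ℝ) * π * t from by ring]
        ring
      · exact absurd heq h
      · rw [if_neg (by omega)]
        have hcast : ((n.natAbs : ℕ) : ℝ) = (n:ℝ) := by
          rw [Nat.cast_natAbs, abs_of_pos hgt]
        rw [hcast, show π * (n:ℝ) * t = (n:ℝ) * π * t from by ring]

lemma sine_density {w : ℝ → ℝ} (hw : Continuous w) (h0 : w 0 = 0) (h1 : w 1 = 0)
    {ε : ℝ} (hε : 0 < ε) :
    ∃ (N : ℕ) (q : ℕ → ℝ), ∀ t ∈ Icc (0:ℝ) 1,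
      |w t - ∑ n ∈ Finset.Icc 1 N, q n * Real.sin ((n:ℝ) * π * t)| ≤ ε := by
  haveI : Fact (0 < (2:ℝ)) := ⟨by norm_num⟩
  have hextc : Continuous (oddExt w) := oddExt_continuous hw
  have hext_neg1 : oddExt w (-1) = 0 := by
    unfold oddExt
    rw [cl_of_nonpos (by norm_num), cl_of_ge_one (by norm_num : (1:ℝ) ≤ - -1), h0, h1, sub_zero]
  have hext_one : oddExt w 1 = 0 := by
    unfold oddExt
    rw [cl_of_ge_one le_rfl, cl_of_nonpos (by norm_num), h0, h1, sub_zero]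
  set G : AddCircle (2:ℝ) → ℝ := AddCircle.liftIco 2 (-1) (oddExt w) with hG
  have hGc : Continuous G := by
    apply AddCircle.liftIco_continuous
    · show oddExt w (-1) = oddExt w (-1 + 2)
      rw [hext_neg1, show (-1:ℝ) + 2 = 1 by norm_num, hext_one]
    · exact hextc.continuousOn
  have hGcoe : ∀ x : ℝ, x ∈ Ico (-1:ℝ) 1 → G ((x : ℝ) : AddCircle (2:ℝ)) = oddExt w x := by
    intro x hx
    apply AddCircle.liftIco_coe_apply
    rw [show (-1:ℝ) + 2 = 1 by norm_num]
    exact hx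
  set Fc : C(AddCircle (2:ℝ), ℂ) := ⟨fun x => (G x : ℂ), Complex.continuous_ofReal.comp hGc⟩
    with hFc
  have hmem : Fc ∈ (Submodule.span ℂ (Set.range (@fourier 2))).topologicalClosure := by
    rw [span_fourier_closure_eq_top]; trivial
  have hclos : Fc ∈ closure ((Submodule.span ℂ (Set.range (@fourier 2)) : Submodule ℂ _) : Set _) :=
    hmem
  obtain ⟨P, hPmem, hPdist⟩ := Metric.mem_closure_iff.mp hclos ε hε
  obtain ⟨c, hc⟩ := Finsupp.mem_span_range_iff_exists_finsupp.mp hPmem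
  have hpt : ∀ x : ℝ, x ∈ Ico (-1:ℝ) 1 →
      ‖((oddExt w x : ℂ)
        - ∑ n ∈ c.support, c n * Complex.exp (((π * n * x : ℝ) : ℂ) * Complex.I))‖ ≤ ε := by
    intro x hx
    have h2 : dist (Fc ((x:ℝ) : AddCircle (2:ℝ))) (P ((x:ℝ) : AddCircle (2:ℝ))) ≤ dist Fc P :=
      ContinuousMap.dist_apply_le_dist _
    have hPx : P ((x:ℝ) : AddCircle (2:ℝ))
        = ∑ n ∈ c.support, c n * Complex.exp (((π * n * x : ℝ) : ℂ) * Complex.I) := by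
      rw [← hc, Finsupp.sum, ContinuousMap.coe_sum, Finset.sum_apply]
      apply Finset.sum_congr rfl
      intro n _
      rw [ContinuousMap.smul_apply, fourier_coe_apply]
      rw [smul_eq_mul]
      congr 1
      push_cast
      ring
    have hFx : Fc ((x:ℝ) : AddCircle (2:ℝ)) = (oddExt w x : ℂ) := by
      rw [hFc]
      simp only [ContinuousMap.coe_mk]
      rw [hGcoe x hx]
    calc ‖(((oddExt w x : ℝ) : ℂ)
          - ∑ n ∈ c.support, c n * Complex.exp (((π * n * x : ℝ) : ℂ) * Complex.I))‖
        = dist (Fc ((x:ℝ) : AddCircle (2:ℝ))) (P ((x:ℝ) : AddCircle (2:ℝ))) := by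
          rw [Complex.dist_eq, hFx, hPx]
      _ ≤ dist Fc P := h2
      _ ≤ ε := le_of_lt hPdist
  -- combine the two pointwise bounds into a real sine approximation on [0,1)
  set γ : ℤ → ℝ := fun n => (c n * Complex.I).re with hγ
  have hmid : ∀ t ∈ Ico (0:ℝ) 1,
      |w t - ∑ n ∈ c.support, γ n * Real.sin (π * (n:ℝ) * t)| ≤ ε := by
    intro t ht
    have htIcc : t ∈ Icc (0:ℝ) 1 := ⟨ht.1, le_of_lt ht.2⟩
    have ht1 : t ∈ Ico (-1:ℝ) 1 := ⟨by linarith [ht.1], ht.2⟩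
    have ht2 : -t ∈ Ico (-1:ℝ) 1 := ⟨by linarith [ht.2], by linarith [ht.1]⟩
    have e1 := hpt t ht1
    have e2 := hpt (-t) ht2
    rw [oddExt_eq h0 htIcc] at e1
    rw [oddExt_neg, oddExt_eq h0 htIcc] at e2
    have hcomb : ((w t : ℝ) : ℂ) - ∑ n ∈ c.support, c n * Complex.I * Complex.sin ((π * n * t : ℝ):ℂ)
        = (((w t : ℝ):ℂ) - ∑ n ∈ c.support, c n * Complex.exp (((π * n * t : ℝ):ℂ) * Complex.I)) / 2
          - ((-(w t : ℝ):ℂ) - ∑ n ∈ c.support, c n * Complex.exp (((π * n * (-t) : ℝ):ℂ) * Complex.I)) / 2 := by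
      have hterm : ∀ n ∈ c.support,
          c n * Complex.exp (((π * n * t : ℝ):ℂ) * Complex.I)
            - c n * Complex.exp (((π * n * (-t) : ℝ):ℂ) * Complex.I)
          = 2 * (c n * Complex.I * Complex.sin ((π * n * t : ℝ):ℂ)) := by
        intro n _
        rw [show (π * (n:ℝ) * (-t) : ℝ) = -(π * n * t : ℝ) from by ring]
        rw [← mul_sub, exp_sub_exp_neg (π * n * t)]
        ring
      have hsum : (∑ n ∈ c.support, c n * Complex.exp (((π * n * t : ℝ):ℂ) * Complex.I))
          - (∑ n ∈ c.support, c n * Complex.exp (((π * n * (-t) : ℝ):ℂ) * Complex.I))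
          = 2 * ∑ n ∈ c.support, c n * Complex.I * Complex.sin ((π * n * t : ℝ):ℂ) := by
        rw [← Finset.sum_sub_distrib, Finset.sum_congr rfl hterm, ← Finset.mul_sum]
      linear_combination hsum / 2
    have habs : ‖(((w t : ℝ):ℂ)
        - ∑ n ∈ c.support, c n * Complex.I * Complex.sin ((π * n * t : ℝ):ℂ))‖ ≤ ε := by
      rw [hcomb]
      calc ‖_‖ ≤ ‖((((w t : ℝ):ℂ) - ∑ n ∈ c.support, c n * Complex.exp (((π * n * t : ℝ):ℂ) * Complex.I)) / 2)‖
            + ‖(((-(w t : ℝ):ℂ) - ∑ n ∈ c.support, c n * Complex.exp (((π * n * (-t) : ℝ):ℂ) * Complex.I)) / 2)‖ := by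
            apply norm_sub_le
        _ ≤ ε := by
            rw [norm_div, norm_div]
            simp only [Complex.norm_two]
            have e2' : ‖((-(w t:ℝ) : ℂ) - ∑ n ∈ c.support, c n * Complex.exp (((π * n * (-t) : ℝ):ℂ) * Complex.I))‖ ≤ ε := by
              convert e2 using 3
              push_cast
              ring
            linarith [e1, e2']
    have hre : (((w t : ℝ):ℂ) - ∑ n ∈ c.support, c n * Complex.I * Complex.sin ((π * n * t : ℝ):ℂ)).re
        = w t - ∑ n ∈ c.support, γ n * Real.sin (π * (n:ℝ) * t) := by
      rw [Complex.sub_re, Complex.ofReal_re, Complex.re_sum]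
      congr 1
      apply Finset.sum_congr rfl
      intro n _
      rw [← Complex.ofReal_sin, Complex.mul_re, Complex.ofReal_re, Complex.ofReal_im,
        mul_zero, sub_zero]
    calc |w t - ∑ n ∈ c.support, γ n * Real.sin (π * (n:ℝ) * t)|
        = |(((w t : ℝ):ℂ) - ∑ n ∈ c.support, c n * Complex.I * Complex.sin ((π * n * t : ℝ):ℂ)).re| := by rw [hre]
      _ ≤ ‖(((w t : ℝ):ℂ) - ∑ n ∈ c.support, c n * Complex.I * Complex.sin ((π * n * t : ℝ):ℂ))‖ :=
          Complex.abs_re_le_norm _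
      _ ≤ ε := habs
  obtain ⟨N, q, hq⟩ := reindex c.support γ
  refine ⟨N, q, ?_⟩
  have hsub : Ico (0:ℝ) 1 ⊆ {t : ℝ | |w t - ∑ j ∈ Finset.Icc 1 N, q j * Real.sin ((j:ℝ) * π * t)| ≤ ε} := by
    intro t ht
    simp only [Set.mem_setOf_eq]
    rw [hq t]
    exact hmid t ht
  have hclosed : IsClosed {t : ℝ | |w t - ∑ j ∈ Finset.Icc 1 N, q j * Real.sin ((j:ℝ) * π * t)| ≤ ε} := by
    apply isClosed_le _ continuous_const
    apply Continuous.abs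
    apply hw.sub
    apply continuous_finset_sum
    intro j _
    fun_prop
  intro t ht
  have := closure_minimal hsub hclosed
  rw [closure_Ico (by norm_num : (0:ℝ) ≠ 1)] at this
  exact this ht


end BVP1

namespace BVP1

lemma integral_sq_le_of_bound {F : ℝ → ℝ} (hF : Continuous F) {δ : ℝ} (hδ : 0 ≤ δ)
    (hb : ∀ t ∈ Icc (0:ℝ) 1, |F t| ≤ δ) :
    ∫ t in (0:ℝ)..1, (F t)^2 ≤ δ^2 := by
  have : ∫ t in (0:ℝ)..1, (F t)^2 ≤ ∫ t in (0:ℝ)..1, δ^2 := by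
    apply intervalIntegral.integral_mono_on (by norm_num)
      ((hF.pow 2).intervalIntegrable _ _) (intervalIntegrable_const)
    intro t ht
    have := hb t ht
    calc (F t)^2 = |F t|^2 := (sq_abs _).symm
      _ ≤ δ^2 := by nlinarith [abs_nonneg (F t)]
  simpa using this

/-- Parseval lower bound via density -/
lemma parseval_bound {w : ℝ → ℝ} (hw : Continuous w) (h0 : w 0 = 0) (h1 : w 1 = 0)
    {ε : ℝ} (hε : 0 < ε) :
    ∃ N : ℕ, (∫ t in (0:ℝ)..1, (w t)^2)
      ≤ (∑ n ∈ Finset.Icc 1 N, (∫ t in (0:ℝ)..1, w t * es n t)^2) + ε := by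
  obtain ⟨N, q, hq⟩ := sine_density hw h0 h1 (Real.sqrt_pos.mpr hε)
  refine ⟨N, ?_⟩
  have hconv : ∀ t : ℝ, ∑ n ∈ Finset.Icc 1 N, (q n / Real.sqrt 2) * es n t
      = ∑ n ∈ Finset.Icc 1 N, q n * Real.sin ((n:ℝ) * π * t) := by
    intro t
    apply Finset.sum_congr rfl
    intro n _
    unfold es
    have h2 : Real.sqrt 2 ≠ 0 := by positivity
    field_simp
  have hsq : ∫ t in (0:ℝ)..1, (w t - ∑ n ∈ Finset.Icc 1 N, (q n / Real.sqrt 2) * es n t)^2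
      ≤ Real.sqrt ε ^ 2 := by
    apply integral_sq_le_of_bound
    · apply hw.sub
      apply continuous_finset_sum
      intro n _
      exact continuous_const.mul (es_continuous n)
    · positivity
    · intro t ht
      rw [hconv t]
      exact hq t ht
  rw [Real.sq_sqrt (le_of_lt hε)] at hsq
  have := best_approx hw N (fun n => q n / Real.sqrt 2)
  linarith

lemma key_estimate (c : ℝ) (m : ℕ) (hc1 : π^2 * (m:ℝ)^2 < c) (hc2 : c < π^2 * ((m:ℝ)+1)^2)
    {w w' w'' : ℝ → ℝ} (hw : ∀ t, HasDerivAt w (w' t) t) (hw' : ∀ t, HasDerivAt w' (w'' t) t)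
    (hc'' : Continuous w'') (h0 : w 0 = 0) (h1 : w 1 = 0) :
    (min (c - π^2 * (m:ℝ)^2) (π^2 * ((m:ℝ)+1)^2 - c))^2 * ∫ t in (0:ℝ)..1, (w t)^2
      ≤ ∫ t in (0:ℝ)..1, (w'' t + c * w t)^2 := by
  have hwc : Continuous w := continuous_iff_continuousAt.2 fun t => (hw t).continuousAt
  set d := min (c - π^2 * (m:ℝ)^2) (π^2 * ((m:ℝ)+1)^2 - c) with hd
  have hdpos : 0 < d := lt_min (by linarith) (by linarith)
  set g : ℝ → ℝ := fun t => w'' t + c * w t with hg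
  have hgc : Continuous g := hc''.add (continuous_const.mul hwc)
  set a : ℕ → ℝ := fun n => ∫ t in (0:ℝ)..1, w t * es n t with ha
  have hb : ∀ n : ℕ, (∫ t in (0:ℝ)..1, g t * es n t) = (c - ((n:ℝ)*π)^2) * a n := by
    intro n
    have e1 : ∀ t : ℝ, g t * es n t
        = Real.sqrt 2 * (w'' t * Real.sin ((n:ℝ)*π*t)) + c * (w t * es n t) := by
      intro t; unfold es; rw [hg]; ring
    simp_rw [e1]
    rw [intervalIntegral.integral_add (f := fun t => Real.sqrt 2 * (w'' t * Real.sin ((n:ℝ)*π*t)))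
        (g := fun t => c * (w t * es n t))
        ((continuous_const.mul (hc''.mul (by fun_prop))).intervalIntegrable _ _)
        ((continuous_const.mul (hwc.mul (es_continuous n))).intervalIntegrable _ _),
      intervalIntegral.integral_const_mul, intervalIntegral.integral_const_mul,
      parts hw hw' hc'' h0 h1 n]
    have e2 : (∫ x in (0:ℝ)..1, w x * es n x)
        = Real.sqrt 2 * ∫ t in (0:ℝ)..1, w t * Real.sin ((n:ℝ)*π*t) := by
      rw [← intervalIntegral.integral_const_mul]
      apply intervalIntegral.integral_congr
      intro t _
      unfold es; ring
    have e4 : a n = Real.sqrt 2 * ∫ t in (0:ℝ)..1, w t * Real.sin ((n:ℝ)*π*t) := e2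
    rw [e4, e2]
    ring
  have hgap : ∀ n : ℕ, 1 ≤ n → d^2 ≤ (c - ((n:ℝ)*π)^2)^2 := by
    intro n hn
    have hππ : (0:ℝ) < π := Real.pi_pos
    rcases le_or_gt n m with hle | hgt
    · have hmono : ((n:ℝ)*π)^2 ≤ π^2 * (m:ℝ)^2 := by
        have hnm : (n:ℝ) ≤ (m:ℝ) := by exact_mod_cast hle
        have hn0 : (0:ℝ) ≤ (n:ℝ) := by positivity
        have h2 : (n:ℝ)^2 ≤ (m:ℝ)^2 := by nlinarith
        calc ((n:ℝ)*π)^2 = (n:ℝ)^2 * π^2 := by ring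
          _ ≤ (m:ℝ)^2 * π^2 := mul_le_mul_of_nonneg_right h2 (sq_nonneg π)
          _ = π^2 * (m:ℝ)^2 := by ring
      have h1' : d ≤ c - ((n:ℝ)*π)^2 := le_trans (min_le_left _ _) (by linarith)
      exact sq_le_sq' (by linarith) h1'
    · have hge : (m:ℝ) + 1 ≤ (n:ℝ) := by exact_mod_cast hgt
      have hmono : π^2 * ((m:ℝ)+1)^2 ≤ ((n:ℝ)*π)^2 := by
        have hn0 : (0:ℝ) ≤ (m:ℝ) + 1 := by positivity
        have h2 : ((m:ℝ)+1)^2 ≤ (n:ℝ)^2 := by nlinarith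
        calc π^2 * ((m:ℝ)+1)^2 = ((m:ℝ)+1)^2 * π^2 := by ring
          _ ≤ (n:ℝ)^2 * π^2 := mul_le_mul_of_nonneg_right h2 (sq_nonneg π)
          _ = ((n:ℝ)*π)^2 := by ring
      have h1' : d ≤ ((n:ℝ)*π)^2 - c := le_trans (min_le_right _ _) (by linarith)
      have := sq_le_sq' (a := d) (b := ((n:ℝ)*π)^2 - c) (by linarith) h1'
      calc d^2 ≤ (((n:ℝ)*π)^2 - c)^2 := this
        _ = (c - ((n:ℝ)*π)^2)^2 := by ring
  have main : ∀ N : ℕ, d^2 * (∑ n ∈ Finset.Icc 1 N, (a n)^2) ≤ ∫ t in (0:ℝ)..1, (g t)^2 := by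
    intro N
    have hB := bessel hgc N
    have hstep : d^2 * (∑ n ∈ Finset.Icc 1 N, (a n)^2)
        ≤ ∑ n ∈ Finset.Icc 1 N, (∫ t in (0:ℝ)..1, g t * es n t)^2 := by
      rw [Finset.mul_sum]
      apply Finset.sum_le_sum
      intro n hn
      rw [hb n]
      have := hgap n (Finset.mem_Icc.mp hn).1
      calc d^2 * a n^2 ≤ (c - ((n:ℝ)*π)^2)^2 * a n^2 :=
            mul_le_mul_of_nonneg_right this (sq_nonneg _)
        _ = ((c - ((n:ℝ)*π)^2) * a n)^2 := by ring
    linarith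
  -- conclude via Parseval
  have main' : ∀ N : ℕ, d^2 * (∑ n ∈ Finset.Icc 1 N, (a n)^2)
      ≤ ∫ t in (0:ℝ)..1, (w'' t + c * w t)^2 := by
    intro N
    have := main N
    simpa only [hg] using this
  apply le_of_forall_pos_le_add
  intro ε hε
  obtain ⟨N, hN⟩ := parseval_bound hwc h0 h1 (ε := ε / d^2) (by positivity)
  have := main N
  have hd2 : (0:ℝ) < d^2 := by positivity
  calc d^2 * ∫ t in (0:ℝ)..1, (w t)^2
      ≤ d^2 * ((∑ n ∈ Finset.Icc 1 N, (a n)^2) + ε / d^2) := by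
        apply mul_le_mul_of_nonneg_left _ (le_of_lt hd2)
        exact hN
    _ = d^2 * (∑ n ∈ Finset.Icc 1 N, (a n)^2) + ε := by
        field_simp
    _ ≤ (∫ t in (0:ℝ)..1, (w'' t + c * w t)^2) + ε := by linarith [main' N]

end BVP1

namespace BVP1

noncomputable def Cc (σ : ℝ) (ψ : ℝ → ℝ) (t : ℝ) : ℝ := ∫ s in (0:ℝ)..t, Real.cos (σ*s) * ψ s
noncomputable def Ss (σ : ℝ) (ψ : ℝ → ℝ) (t : ℝ) : ℝ := ∫ s in (0:ℝ)..t, Real.sin (σ*s) * ψ s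
noncomputable def Aco (σ : ℝ) (ψ : ℝ → ℝ) : ℝ :=
  -(Real.cos σ * Cc σ ψ 1 + Real.sin σ * Ss σ ψ 1) / Real.sin σ
noncomputable def Sop (σ : ℝ) (ψ : ℝ → ℝ) (t : ℝ) : ℝ :=
  Aco σ ψ * Real.sin (σ*t) + Real.cos (σ*t) * Cc σ ψ t + Real.sin (σ*t) * Ss σ ψ t
noncomputable def Sop' (σ : ℝ) (ψ : ℝ → ℝ) (t : ℝ) : ℝ :=
  Aco σ ψ * σ * Real.cos (σ*t) + ψ t
    + σ * (Real.cos (σ*t) * Ss σ ψ t - Real.sin (σ*t) * Cc σ ψ t)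

variable {σ : ℝ} {ψ : ℝ → ℝ}

lemma hasDerivAt_sin_sigma (σ t : ℝ) :
    HasDerivAt (fun t => Real.sin (σ*t)) (σ * Real.cos (σ*t)) t := by
  have h1 : HasDerivAt (fun t : ℝ => σ * t) σ t := by
    simpa using (hasDerivAt_id t).const_mul σ
  simpa [mul_comm] using h1.sin

lemma hasDerivAt_cos_sigma (σ t : ℝ) :
    HasDerivAt (fun t => Real.cos (σ*t)) (-(σ * Real.sin (σ*t))) t := by
  have h1 : HasDerivAt (fun t : ℝ => σ * t) σ t := by
    simpa using (hasDerivAt_id t).const_mul σ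
  simpa [mul_comm] using h1.cos

lemma Cc_hasDeriv (hψ : Continuous ψ) (t : ℝ) :
    HasDerivAt (Cc σ ψ) (Real.cos (σ*t) * ψ t) t := ftc (by fun_prop) t

lemma Ss_hasDeriv (hψ : Continuous ψ) (t : ℝ) :
    HasDerivAt (Ss σ ψ) (Real.sin (σ*t) * ψ t) t := ftc (by fun_prop) t

lemma Cc_cont (hψ : Continuous ψ) : Continuous (Cc σ ψ) :=
  continuous_iff_continuousAt.2 fun t => (Cc_hasDeriv hψ t).continuousAt

lemma Ss_cont (hψ : Continuous ψ) : Continuous (Ss σ ψ) :=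
  continuous_iff_continuousAt.2 fun t => (Ss_hasDeriv hψ t).continuousAt

lemma Sop_cont (hψ : Continuous ψ) : Continuous (Sop σ ψ) := by
  unfold Sop
  have := Cc_cont (σ := σ) hψ
  have := Ss_cont (σ := σ) hψ
  fun_prop

lemma Sop'_cont (hψ : Continuous ψ) : Continuous (Sop' σ ψ) := by
  unfold Sop'
  have := Cc_cont (σ := σ) hψ
  have := Ss_cont (σ := σ) hψ
  fun_prop

lemma Sop_hasDeriv (hψ : Continuous ψ) (t : ℝ) :
    HasDerivAt (Sop σ ψ) (Sop' σ ψ t) t := by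
  have h1 : HasDerivAt (fun t => Aco σ ψ * Real.sin (σ*t)) (Aco σ ψ * (σ * Real.cos (σ*t))) t :=
    (hasDerivAt_sin_sigma σ t).const_mul _
  have h2 : HasDerivAt (fun t => Real.cos (σ*t) * Cc σ ψ t)
      (-(σ * Real.sin (σ*t)) * Cc σ ψ t + Real.cos (σ*t) * (Real.cos (σ*t) * ψ t)) t :=
    (hasDerivAt_cos_sigma σ t).mul (Cc_hasDeriv hψ t)
  have h3 : HasDerivAt (fun t => Real.sin (σ*t) * Ss σ ψ t)
      (σ * Real.cos (σ*t) * Ss σ ψ t + Real.sin (σ*t) * (Real.sin (σ*t) * ψ t)) t :=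
    (hasDerivAt_sin_sigma σ t).mul (Ss_hasDeriv hψ t)
  have := (h1.add h2).add h3
  refine this.congr_deriv ?_
  symm
  unfold Sop'
  have hpy := Real.sin_sq_add_cos_sq (σ*t)
  linear_combination (-(ψ t)) * hpy

lemma Sop_zero : Sop σ ψ 0 = 0 := by
  unfold Sop Cc Ss
  simp

lemma Sop_one (hσ : Real.sin σ ≠ 0) : Sop σ ψ 1 = 0 := by
  unfold Sop Aco
  field_simp
  ring

/-- d/dt of Sop' (when ψ is C¹) -/
lemma Sop'_hasDeriv {ψ' : ℝ → ℝ} (hψc : Continuous ψ) (hψ : ∀ t, HasDerivAt ψ (ψ' t) t)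
    (t : ℝ) :
    HasDerivAt (Sop' σ ψ) (ψ' t - σ^2 * Sop σ ψ t) t := by
  have h1 : HasDerivAt (fun t => Aco σ ψ * σ * Real.cos (σ*t))
      (Aco σ ψ * σ * (-(σ * Real.sin (σ*t)))) t := (hasDerivAt_cos_sigma σ t).const_mul _
  have h3 : HasDerivAt (fun t => Real.cos (σ*t) * Ss σ ψ t)
      (-(σ * Real.sin (σ*t)) * Ss σ ψ t + Real.cos (σ*t) * (Real.sin (σ*t) * ψ t)) t :=
    (hasDerivAt_cos_sigma σ t).mul (Ss_hasDeriv hψc t)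
  have h4 : HasDerivAt (fun t => Real.sin (σ*t) * Cc σ ψ t)
      (σ * Real.cos (σ*t) * Cc σ ψ t + Real.sin (σ*t) * (Real.cos (σ*t) * ψ t)) t :=
    (hasDerivAt_sin_sigma σ t).mul (Cc_hasDeriv hψc t)
  have h5 := (h3.sub h4).const_mul σ
  have := (h1.add (hψ t)).add h5
  have h6 : HasDerivAt (Sop' σ ψ)
      (Aco σ ψ * σ * (-(σ * Real.sin (σ*t))) + ψ' t
        + σ * ((-(σ * Real.sin (σ*t)) * Ss σ ψ t + Real.cos (σ*t) * (Real.sin (σ*t) * ψ t))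
          - (σ * Real.cos (σ*t) * Cc σ ψ t + Real.sin (σ*t) * (Real.cos (σ*t) * ψ t)))) t := by
    unfold Sop'
    exact this
  convert h6 using 1
  unfold Sop
  ring

/-- the integrated ODE identity -/
lemma Sop_identity (hψ : Continuous ψ) (t : ℝ) :
    Sop' σ ψ t + σ^2 * ∫ s in (0:ℝ)..t, Sop σ ψ s = Sop' σ ψ 0 + ψ t - ψ 0 := by
  set W : ℝ → ℝ := fun t => Aco σ ψ * σ * Real.cos (σ*t)
    + σ * (Real.cos (σ*t) * Ss σ ψ t - Real.sin (σ*t) * Cc σ ψ t)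
    + σ^2 * (∫ s in (0:ℝ)..t, Sop σ ψ s) - Aco σ ψ * σ with hW
  have hWd : ∀ x : ℝ, HasDerivAt W 0 x := by
    intro x
    have h1 : HasDerivAt (fun t => Aco σ ψ * σ * Real.cos (σ*t))
        (Aco σ ψ * σ * (-(σ * Real.sin (σ*x)))) x := (hasDerivAt_cos_sigma σ x).const_mul _
    have h3 : HasDerivAt (fun t => Real.cos (σ*t) * Ss σ ψ t)
        (-(σ * Real.sin (σ*x)) * Ss σ ψ x + Real.cos (σ*x) * (Real.sin (σ*x) * ψ x)) x :=
      (hasDerivAt_cos_sigma σ x).mul (Ss_hasDeriv hψ x)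
    have h4 : HasDerivAt (fun t => Real.sin (σ*t) * Cc σ ψ t)
        (σ * Real.cos (σ*x) * Cc σ ψ x + Real.sin (σ*x) * (Real.cos (σ*x) * ψ x)) x :=
      (hasDerivAt_sin_sigma σ x).mul (Cc_hasDeriv hψ x)
    have h5 := (h3.sub h4).const_mul σ
    have h6 : HasDerivAt (fun t => ∫ s in (0:ℝ)..t, Sop σ ψ s) (Sop σ ψ x) x :=
      ftc (Sop_cont hψ) x
    have h7 := ((h1.add h5).add (h6.const_mul (σ^2))).sub_const (Aco σ ψ * σ)
    have : HasDerivAt W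
        (Aco σ ψ * σ * (-(σ * Real.sin (σ*x)))
          + σ * ((-(σ * Real.sin (σ*x)) * Ss σ ψ x + Real.cos (σ*x) * (Real.sin (σ*x) * ψ x))
            - (σ * Real.cos (σ*x) * Cc σ ψ x + Real.sin (σ*x) * (Real.cos (σ*x) * ψ x)))
          + σ^2 * Sop σ ψ x) x := by
      rw [hW]
      exact h7
    convert this using 1
    unfold Sop
    ring
  have hWconst : W t = W 0 := by
    have hdiff : Differentiable ℝ W := fun x => (hWd x).differentiableAt
    have hzero : ∀ x, deriv W x = 0 := fun x => (hWd x).deriv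
    exact is_const_of_deriv_eq_zero hdiff hzero t 0
  have hCc0 : Cc σ ψ 0 = 0 := by unfold Cc; simp
  have hSs0 : Ss σ ψ 0 = 0 := by unfold Ss; simp
  have hW0 : W 0 = 0 := by
    rw [hW]
    simp only
    rw [hCc0, hSs0, mul_zero]
    norm_num
  rw [hW0] at hWconst
  have hWt := hWconst
  rw [hW] at hWt
  simp only at hWt
  have h0' : Sop' σ ψ 0 = Aco σ ψ * σ + ψ 0 := by
    unfold Sop'
    rw [mul_zero, Real.cos_zero, Real.sin_zero, hCc0, hSs0]
    ring
  rw [h0']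
  unfold Sop'
  linarith [hWt]

lemma abs_int_le {φ χ : ℝ → ℝ} (hφ : Continuous φ) (hχ : Continuous χ)
    (hb : ∀ s ∈ Icc (0:ℝ) 1, |φ s| ≤ |χ s|) {t : ℝ} (ht : t ∈ Icc (0:ℝ) 1) :
    |∫ s in (0:ℝ)..t, φ s| ≤ ∫ s in (0:ℝ)..1, |χ s| := by
  calc |∫ s in (0:ℝ)..t, φ s| ≤ ∫ s in (0:ℝ)..t, |φ s| := by
        apply intervalIntegral.abs_integral_le_integral_abs ht.1
    _ ≤ ∫ s in (0:ℝ)..t, |χ s| := by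
        apply intervalIntegral.integral_mono_on ht.1
          (hφ.abs.intervalIntegrable _ _) (hχ.abs.intervalIntegrable _ _)
        intro s hs
        exact hb s ⟨hs.1, le_trans hs.2 ht.2⟩
    _ ≤ ∫ s in (0:ℝ)..1, |χ s| := by
        apply intervalIntegral.integral_mono_interval (le_refl (0:ℝ)) ht.1 ht.2
          _ (hχ.abs.intervalIntegrable _ _)
        filter_upwards with s using abs_nonneg _

lemma Sop_bound (hψ : Continuous ψ) (hσ : Real.sin σ ≠ 0) {t : ℝ} (ht : t ∈ Icc (0:ℝ) 1) :
    |Sop σ ψ t| ≤ (2 / |Real.sin σ| + 2) * ∫ s in (0:ℝ)..1, |ψ s| := by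
  have hint : (0:ℝ) ≤ ∫ s in (0:ℝ)..1, |ψ s| :=
    intervalIntegral.integral_nonneg (by norm_num) (fun s _ => abs_nonneg _)
  have hCc : ∀ u ∈ Icc (0:ℝ) 1, |Cc σ ψ u| ≤ ∫ s in (0:ℝ)..1, |ψ s| := by
    intro u hu
    apply abs_int_le (by fun_prop) hψ _ hu
    intro s _
    rw [abs_mul]
    calc |Real.cos (σ*s)| * |ψ s| ≤ 1 * |ψ s| :=
          mul_le_mul_of_nonneg_right (Real.abs_cos_le_one _) (abs_nonneg _)
      _ = |ψ s| := one_mul _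
  have hSs : ∀ u ∈ Icc (0:ℝ) 1, |Ss σ ψ u| ≤ ∫ s in (0:ℝ)..1, |ψ s| := by
    intro u hu
    apply abs_int_le (by fun_prop) hψ _ hu
    intro s _
    rw [abs_mul]
    calc |Real.sin (σ*s)| * |ψ s| ≤ 1 * |ψ s| :=
          mul_le_mul_of_nonneg_right (Real.abs_sin_le_one _) (abs_nonneg _)
      _ = |ψ s| := one_mul _
  have h1Icc : (1:ℝ) ∈ Icc (0:ℝ) 1 := by norm_num
  have hA : |Aco σ ψ| ≤ 2 / |Real.sin σ| * ∫ s in (0:ℝ)..1, |ψ s| := by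
    unfold Aco
    rw [abs_div, div_mul_eq_mul_div]
    have hnum : |-(Real.cos σ * Cc σ ψ 1 + Real.sin σ * Ss σ ψ 1)|
        ≤ 2 * ∫ s in (0:ℝ)..1, |ψ s| := by
      rw [abs_neg]
      calc |Real.cos σ * Cc σ ψ 1 + Real.sin σ * Ss σ ψ 1|
          ≤ |Real.cos σ * Cc σ ψ 1| + |Real.sin σ * Ss σ ψ 1| := abs_add_le _ _
        _ ≤ |Cc σ ψ 1| + |Ss σ ψ 1| := by
            rw [abs_mul, abs_mul]
            have b1 := mul_le_mul_of_nonneg_right (Real.abs_cos_le_one σ) (abs_nonneg (Cc σ ψ 1))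
            have b2 := mul_le_mul_of_nonneg_right (Real.abs_sin_le_one σ) (abs_nonneg (Ss σ ψ 1))
            rw [one_mul] at b1 b2
            linarith
        _ ≤ 2 * ∫ s in (0:ℝ)..1, |ψ s| := by
            have := hCc 1 h1Icc
            have := hSs 1 h1Icc
            linarith
    exact (div_le_div_iff_of_pos_right (abs_pos.mpr hσ)).mpr hnum
  calc |Sop σ ψ t|
      ≤ |Aco σ ψ * Real.sin (σ*t)| + |Real.cos (σ*t) * Cc σ ψ t|
        + |Real.sin (σ*t) * Ss σ ψ t| := by
        unfold Sop
        calc |Aco σ ψ * Real.sin (σ*t) + Real.cos (σ*t) * Cc σ ψ t + Real.sin (σ*t) * Ss σ ψ t|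
            ≤ |Aco σ ψ * Real.sin (σ*t) + Real.cos (σ*t) * Cc σ ψ t|
              + |Real.sin (σ*t) * Ss σ ψ t| := abs_add_le _ _
          _ ≤ _ := by linarith [abs_add_le (Aco σ ψ * Real.sin (σ*t)) (Real.cos (σ*t) * Cc σ ψ t)]
    _ ≤ |Aco σ ψ| + |Cc σ ψ t| + |Ss σ ψ t| := by
        rw [abs_mul, abs_mul, abs_mul]
        have b1 := mul_le_mul_of_nonneg_left (Real.abs_sin_le_one (σ*t)) (abs_nonneg (Aco σ ψ))
        have b2 := mul_le_mul_of_nonneg_right (Real.abs_cos_le_one (σ*t)) (abs_nonneg (Cc σ ψ t))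
        have b3 := mul_le_mul_of_nonneg_right (Real.abs_sin_le_one (σ*t)) (abs_nonneg (Ss σ ψ t))
        rw [mul_one] at b1
        rw [one_mul] at b2 b3
        have b2' : |Real.cos (σ*t)| * |Cc σ ψ t| ≤ |Cc σ ψ t| := by
          calc |Real.cos (σ*t)| * |Cc σ ψ t| ≤ 1 * |Cc σ ψ t| :=
              mul_le_mul_of_nonneg_right (Real.abs_cos_le_one _) (abs_nonneg _)
            _ = _ := one_mul _
        have b3' : |Real.sin (σ*t)| * |Ss σ ψ t| ≤ |Ss σ ψ t| := by
          calc |Real.sin (σ*t)| * |Ss σ ψ t| ≤ 1 * |Ss σ ψ t| :=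
              mul_le_mul_of_nonneg_right (Real.abs_sin_le_one _) (abs_nonneg _)
            _ = _ := one_mul _
        linarith
    _ ≤ 2 / |Real.sin σ| * (∫ s in (0:ℝ)..1, |ψ s|)
        + ((∫ s in (0:ℝ)..1, |ψ s|) + (∫ s in (0:ℝ)..1, |ψ s|)) := by
        have := hCc t ht
        have := hSs t ht
        linarith
    _ = (2 / |Real.sin σ| + 2) * ∫ s in (0:ℝ)..1, |ψ s| := by ring

/-- linearity: Sop of difference -/
lemma Sop_sub {ψ₁ ψ₂ : ℝ → ℝ} (h1 : Continuous ψ₁) (h2 : Continuous ψ₂) (t : ℝ) :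
    Sop σ (fun s => ψ₁ s - ψ₂ s) t = Sop σ ψ₁ t - Sop σ ψ₂ t := by
  have hCc : ∀ u : ℝ, Cc σ (fun s => ψ₁ s - ψ₂ s) u = Cc σ ψ₁ u - Cc σ ψ₂ u := by
    intro u
    unfold Cc
    rw [← intervalIntegral.integral_sub ((by fun_prop : Continuous fun s => Real.cos (σ*s) * ψ₁ s).intervalIntegrable _ _)
      ((by fun_prop : Continuous fun s => Real.cos (σ*s) * ψ₂ s).intervalIntegrable _ _)]
    apply intervalIntegral.integral_congr
    intro s _
    ring
  have hSs : ∀ u : ℝ, Ss σ (fun s => ψ₁ s - ψ₂ s) u = Ss σ ψ₁ u - Ss σ ψ₂ u := by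
    intro u
    unfold Ss
    rw [← intervalIntegral.integral_sub ((by fun_prop : Continuous fun s => Real.sin (σ*s) * ψ₁ s).intervalIntegrable _ _)
      ((by fun_prop : Continuous fun s => Real.sin (σ*s) * ψ₂ s).intervalIntegrable _ _)]
    apply intervalIntegral.integral_congr
    intro s _
    ring
  unfold Sop Aco
  rw [hCc, hSs, hCc, hSs]
  ring

end BVP1

namespace BVP1
open BoundedContinuousFunction

lemma l1_le_sqrt_l2 {g : ℝ → ℝ} (hg : Continuous g) :
    ∫ s in (0:ℝ)..1, |g s| ≤ Real.sqrt (∫ s in (0:ℝ)..1, (g s)^2) := by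
  set a := ∫ s in (0:ℝ)..1, |g s| with ha
  have ha0 : 0 ≤ a := intervalIntegral.integral_nonneg (by norm_num) (fun s _ => abs_nonneg _)
  have hexp : ∫ s in (0:ℝ)..1, (|g s| - a)^2 = (∫ s in (0:ℝ)..1, (g s)^2) - a^2 := by
    have e1 : ∀ s : ℝ, (|g s| - a)^2 = ((g s)^2 - 2*a*|g s|) + a^2 := by
      intro s
      have h2 := sq_abs (g s)
      nlinarith [h2]
    simp_rw [e1]
    rw [intervalIntegral.integral_add (f := fun s => g s ^ 2 - 2 * a * |g s|) (g := fun _ => a ^ 2)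
        (((hg.pow 2).sub (continuous_const.mul hg.abs)).intervalIntegrable _ _)
        (continuous_const.intervalIntegrable _ _),
      intervalIntegral.integral_sub (f := fun s => g s ^ 2) (g := fun s => 2 * a * |g s|)
        ((hg.pow 2).intervalIntegrable _ _)
        ((continuous_const.mul hg.abs).intervalIntegrable _ _),
      intervalIntegral.integral_const_mul]
    rw [← ha]
    simp
    ring
  have h0 : (0:ℝ) ≤ ∫ s in (0:ℝ)..1, (|g s| - a)^2 :=
    intervalIntegral.integral_nonneg (by norm_num) (fun s _ => sq_nonneg _)
  rw [hexp] at h0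
  rw [Real.le_sqrt ha0 (by nlinarith [sq_nonneg a])]
  linarith

section Fixed

variable (σ : ℝ) (Φ : ℝ → ℝ → ℝ) (ωc : ℝ → ℝ)

noncomputable def psif (v : ℝ → ℝ) : ℝ → ℝ := fun t => ωc t + ∫ r in (0:ℝ)..t, Φ r (v r)

variable {σ Φ ωc}

lemma Gf_cont (hΦc : Continuous (fun p : ℝ × ℝ => Φ p.1 p.2)) {v : ℝ → ℝ} (hv : Continuous v) :
    Continuous (fun t => Φ t (v t)) :=
  hΦc.comp (continuous_id.prodMk hv)

lemma psif_cont (hΦc : Continuous (fun p : ℝ × ℝ => Φ p.1 p.2)) (hωcont : Continuous ωc)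
    {v : ℝ → ℝ} (hv : Continuous v) : Continuous (psif Φ ωc v) :=
  hωcont.add (continuous_iff_continuousAt.2 fun t => (ftc (Gf_cont hΦc hv) t).continuousAt)

variable (hΦc : Continuous (fun p : ℝ × ℝ => Φ p.1 p.2)) (hωcont : Continuous ωc)
  (hsin : Real.sin σ ≠ 0)

noncomputable def Tb (hΦc : Continuous (fun p : ℝ × ℝ => Φ p.1 p.2)) (hωcont : Continuous ωc)
    (hsin : Real.sin σ ≠ 0) (v : ℝ →ᵇ ℝ) : ℝ →ᵇ ℝ :=
  BoundedContinuousFunction.ofNormedAddCommGroup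
    (fun t => Sop σ (psif Φ ωc ⇑v) (cl t))
    ((Sop_cont (psif_cont hΦc hωcont v.continuous)).comp cl_continuous)
    ((2 / |Real.sin σ| + 2) * ∫ s in (0:ℝ)..1, |psif Φ ωc ⇑v s|)
    (fun t => by
      rw [Real.norm_eq_abs]
      exact Sop_bound (psif_cont hΦc hωcont v.continuous) hsin (cl_mem t))

lemma Tb_apply (v : ℝ →ᵇ ℝ) (t : ℝ) :
    Tb hΦc hωcont hsin v t = Sop σ (psif Φ ωc ⇑v) (cl t) := by
  unfold Tb
  rw [BoundedContinuousFunction.coe_ofNormedAddCommGroup]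

lemma Tb_diff (v w : ℝ →ᵇ ℝ) (t : ℝ) :
    Tb hΦc hωcont hsin v t - Tb hΦc hωcont hsin w t
      = Sop σ (fun s => ∫ r in (0:ℝ)..s, (Φ r (v r) - Φ r (w r))) (cl t) := by
  rw [Tb_apply, Tb_apply]
  rw [← Sop_sub (psif_cont hΦc hωcont v.continuous) (psif_cont hΦc hωcont w.continuous)]
  congr 1
  funext s
  show psif Φ ωc ⇑v s - psif Φ ωc ⇑w s = _
  unfold psif
  rw [intervalIntegral.integral_sub
    ((Gf_cont hΦc v.continuous).intervalIntegrable _ _)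
    ((Gf_cont hΦc w.continuous).intervalIntegrable _ _)]
  ring

lemma Tb_contract (c L : ℝ) (m : ℕ) (hσ2 : σ^2 = c)
    (hc1 : π^2 * (m:ℝ)^2 < c) (hc2 : c < π^2 * ((m:ℝ)+1)^2)
    (hΦlip : ∀ t x y : ℝ, |Φ t x - Φ t y| ≤ L * |x - y|)
    (v w : ℝ →ᵇ ℝ) :
    (min (c - π^2 * (m:ℝ)^2) (π^2 * ((m:ℝ)+1)^2 - c))^2
        * ∫ t in (0:ℝ)..1, (Tb hΦc hωcont hsin v t - Tb hΦc hωcont hsin w t)^2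
      ≤ L^2 * ∫ t in (0:ℝ)..1, (v t - w t)^2 := by
  set δG : ℝ → ℝ := fun r => Φ r (v r) - Φ r (w r) with hδG
  have hδGc : Continuous δG := (Gf_cont hΦc v.continuous).sub (Gf_cont hΦc w.continuous)
  set φ : ℝ → ℝ := fun s => ∫ r in (0:ℝ)..s, δG r with hφ
  have hφc : Continuous φ := continuous_iff_continuousAt.2 fun t => (ftc hδGc t).continuousAt
  have hφ' : ∀ t, HasDerivAt φ (δG t) t := fun t => ftc hδGc t
  have hW := Sop_hasDeriv (σ := σ) hφc
  have hW' := Sop'_hasDeriv (σ := σ) hφc hφ'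
  have hW''c : Continuous (fun t => δG t - σ^2 * Sop σ φ t) :=
    hδGc.sub (continuous_const.mul (Sop_cont hφc))
  have key := key_estimate c m hc1 hc2 hW hW' hW''c (Sop_zero) (Sop_one hsin)
  have e1 : (∫ t in (0:ℝ)..1, ((δG t - σ^2 * Sop σ φ t) + c * Sop σ φ t)^2)
      = ∫ t in (0:ℝ)..1, (δG t)^2 := by
    apply intervalIntegral.integral_congr
    intro t _
    rw [hσ2]
    ring
  rw [e1] at key
  have e2 : (∫ t in (0:ℝ)..1, (Tb hΦc hωcont hsin v t - Tb hΦc hωcont hsin w t)^2)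
      = ∫ t in (0:ℝ)..1, (Sop σ φ t)^2 := by
    apply intervalIntegral.integral_congr
    intro t ht
    have htI : t ∈ Icc (0:ℝ) 1 := by rwa [Set.uIcc_of_le (by norm_num)] at ht
    show (Tb hΦc hωcont hsin v t - Tb hΦc hωcont hsin w t)^2 = (Sop σ φ t)^2
    rw [Tb_diff hΦc hωcont hsin v w t, cl_eq_self htI]
  rw [e2]
  have e3 : (∫ t in (0:ℝ)..1, (δG t)^2) ≤ L^2 * ∫ t in (0:ℝ)..1, (v t - w t)^2 := by
    rw [← intervalIntegral.integral_const_mul]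
    apply intervalIntegral.integral_mono_on (by norm_num)
      ((hδGc.pow 2).intervalIntegrable _ _)
      ((continuous_const.mul (((v.continuous.sub w.continuous)).pow 2)).intervalIntegrable _ _)
    intro s _
    have hlip := hΦlip s (v s) (w s)
    have h1 : |δG s| ≤ L * |v s - w s| := hlip
    have h2 : (δG s)^2 ≤ (L * |v s - w s|)^2 := by
      rw [← sq_abs (δG s)]
      apply pow_le_pow_left₀ (abs_nonneg _) h1
    calc (δG s)^2 ≤ (L * |v s - w s|)^2 := h2
      _ = L^2 * (v s - w s)^2 := by rw [mul_pow, sq_abs]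
  calc (min (c - π^2 * (m:ℝ)^2) (π^2 * ((m:ℝ)+1)^2 - c))^2 * ∫ t in (0:ℝ)..1, (Sop σ φ t)^2
      ≤ ∫ t in (0:ℝ)..1, (δG t)^2 := key
    _ ≤ L^2 * ∫ t in (0:ℝ)..1, (v t - w t)^2 := e3

end Fixed

lemma exists_fixed_point {σ : ℝ} {Φ : ℝ → ℝ → ℝ} {ωc : ℝ → ℝ}
    (hΦc : Continuous (fun p : ℝ × ℝ => Φ p.1 p.2)) (hωcont : Continuous ωc)
    (hsin : Real.sin σ ≠ 0) (c L d : ℝ) (m : ℕ)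
    (hσ2 : σ^2 = c)
    (hc1 : π^2 * (m:ℝ)^2 < c) (hc2 : c < π^2 * ((m:ℝ)+1)^2)
    (hdd : d = min (c - π^2 * (m:ℝ)^2) (π^2 * ((m:ℝ)+1)^2 - c))
    (hLd : L < d) (hL0 : 0 ≤ L)
    (hΦlip : ∀ t x y : ℝ, |Φ t x - Φ t y| ≤ L * |x - y|) :
    ∃ u : ℝ → ℝ, Continuous u ∧ ∀ t : ℝ, u t = Sop σ (psif Φ ωc u) (cl t) := by
  have hd0 : 0 < d := by rw [hdd]; exact lt_min (by linarith) (by linarith)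
  set θ := L / d with hθ
  have hθ0 : 0 ≤ θ := by positivity
  have hθ1 : θ < 1 := (div_lt_one hd0).mpr hLd
  set CS := 2 / |Real.sin σ| + 2 with hCS
  have hCS0 : 0 ≤ CS := by positivity
  set T : (ℝ →ᵇ ℝ) → (ℝ →ᵇ ℝ) := Tb hΦc hωcont hsin with hT
  set dL2 : (ℝ →ᵇ ℝ) → (ℝ →ᵇ ℝ) → ℝ :=
    fun v w => Real.sqrt (∫ t in (0:ℝ)..1, (v t - w t)^2) with hdL2
  have hdL2nn : ∀ v w, 0 ≤ dL2 v w := fun v w => Real.sqrt_nonneg _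
  have hcontr : ∀ v w, dL2 (T v) (T w) ≤ θ * dL2 v w := by
    intro v w
    have hTC := Tb_contract hΦc hωcont hsin c L m hσ2 hc1 hc2 hΦlip v w
    rw [← hdd] at hTC
    have h1 : (∫ t in (0:ℝ)..1, (T v t - T w t)^2) ≤ θ^2 * ∫ t in (0:ℝ)..1, (v t - w t)^2 := by
      rw [hθ, div_pow, div_mul_eq_mul_div, le_div_iff₀ (by positivity)]
      have hcomm : (∫ t in (0:ℝ)..1, (T v t - T w t)^2) * d^2
          = d^2 * ∫ t in (0:ℝ)..1, (T v t - T w t)^2 := mul_comm _ _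
      linarith [hTC, hcomm]
    have h2 := Real.sqrt_le_sqrt h1
    rw [Real.sqrt_mul (sq_nonneg θ), Real.sqrt_sq hθ0] at h2
    exact h2
  have hptdist : ∀ (v w : ℝ →ᵇ ℝ) (t : ℝ), |v t - w t| ≤ dist v w := by
    intro v w t
    rw [← Real.dist_eq]
    exact BoundedContinuousFunction.dist_coe_le_dist t
  have hdL2dist : ∀ v w, dL2 v w ≤ dist v w := by
    intro v w
    have h1 : (∫ t in (0:ℝ)..1, (v t - w t)^2) ≤ (dist v w)^2 :=
      integral_sq_le_of_bound (v.continuous.sub w.continuous) dist_nonneg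
        (fun t _ => hptdist v w t)
    have h2 := Real.sqrt_le_sqrt h1
    rwa [Real.sqrt_sq dist_nonneg] at h2
  have hsup : ∀ v w, dist (T v) (T w) ≤ CS * L * dL2 v w := by
    intro v w
    apply (BoundedContinuousFunction.dist_le (by positivity)).2
    intro t
    rw [Real.dist_eq]
    have hδGc : Continuous (fun r => Φ r (v r) - Φ r (w r)) :=
      (Gf_cont hΦc v.continuous).sub (Gf_cont hΦc w.continuous)
    have hφc : Continuous (fun s => ∫ r in (0:ℝ)..s, (Φ r (v r) - Φ r (w r))) :=
      continuous_iff_continuousAt.2 fun x => (ftc hδGc x).continuousAt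
    rw [hT, Tb_diff hΦc hωcont hsin v w t]
    have hbd := Sop_bound hφc hsin (cl_mem t)
    have hφbound : ∀ s ∈ Icc (0:ℝ) 1,
        |∫ r in (0:ℝ)..s, (Φ r (v r) - Φ r (w r))| ≤ L * dL2 v w := by
      intro s hs
      have hle1 : |∫ r in (0:ℝ)..s, (Φ r (v r) - Φ r (w r))|
          ≤ ∫ r in (0:ℝ)..1, |Φ r (v r) - Φ r (w r)| :=
        abs_int_le hδGc hδGc (fun r _ => le_rfl) hs
      have hle2 : (∫ r in (0:ℝ)..1, |Φ r (v r) - Φ r (w r)|)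
          ≤ L * ∫ r in (0:ℝ)..1, |v r - w r| := by
        rw [← intervalIntegral.integral_const_mul]
        apply intervalIntegral.integral_mono_on (by norm_num)
          (hδGc.abs.intervalIntegrable _ _)
          ((continuous_const.mul (v.continuous.sub w.continuous).abs).intervalIntegrable _ _)
        intro r _
        exact hΦlip r (v r) (w r)
      have hle3 : (∫ r in (0:ℝ)..1, |v r - w r|) ≤ dL2 v w :=
        l1_le_sqrt_l2 (v.continuous.sub w.continuous)
      calc |∫ r in (0:ℝ)..s, (Φ r (v r) - Φ r (w r))|
          ≤ ∫ r in (0:ℝ)..1, |Φ r (v r) - Φ r (w r)| := hle1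
        _ ≤ L * ∫ r in (0:ℝ)..1, |v r - w r| := hle2
        _ ≤ L * dL2 v w := mul_le_mul_of_nonneg_left hle3 hL0
    have hintφ : (∫ s in (0:ℝ)..1, |∫ r in (0:ℝ)..s, (Φ r (v r) - Φ r (w r))|)
        ≤ L * dL2 v w := by
      calc (∫ s in (0:ℝ)..1, |∫ r in (0:ℝ)..s, (Φ r (v r) - Φ r (w r))|)
          ≤ ∫ s in (0:ℝ)..1, L * dL2 v w := by
            apply intervalIntegral.integral_mono_on (by norm_num)
              (hφc.abs.intervalIntegrable _ _) (intervalIntegrable_const)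
            exact hφbound
        _ = L * dL2 v w := by simp
    calc |Sop σ (fun s => ∫ r in (0:ℝ)..s, (Φ r (v r) - Φ r (w r))) (cl t)|
        ≤ CS * ∫ s in (0:ℝ)..1, |∫ r in (0:ℝ)..s, (Φ r (v r) - Φ r (w r))| := hbd
      _ ≤ CS * (L * dL2 v w) := mul_le_mul_of_nonneg_left hintφ hCS0
      _ = CS * L * dL2 v w := by ring
  have hTlip : ∀ v w, dist (T v) (T w) ≤ CS * L * dist v w := by
    intro v w
    calc dist (T v) (T w) ≤ CS * L * dL2 v w := hsup v w
      _ ≤ CS * L * dist v w :=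
        mul_le_mul_of_nonneg_left (hdL2dist v w) (by positivity)
  -- iteration
  set vb : ℕ → (ℝ →ᵇ ℝ) := fun n => T^[n] 0 with hvb
  have hvbsucc : ∀ n, vb (n+1) = T (vb n) := fun n => Function.iterate_succ_apply' T n 0
  set M : ℕ → ℝ := fun n => dL2 (vb (n+1)) (vb n) with hM
  have hMrec : ∀ n, M (n+1) ≤ θ * M n := by
    intro n
    have : M (n+1) = dL2 (T (vb (n+1))) (T (vb n)) := by
      rw [hM]
      simp only
      rw [hvbsucc (n+1), hvbsucc n]
    rw [this]
    exact hcontr _ _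
  have hMgeo : ∀ n, M n ≤ θ^n * M 0 := by
    intro n
    induction n with
    | zero => simp
    | succ n ih =>
      calc M (n+1) ≤ θ * M n := hMrec n
        _ ≤ θ * (θ^n * M 0) := mul_le_mul_of_nonneg_left ih hθ0
        _ = θ^(n+1) * M 0 := by ring
  have hdistgeo : ∀ n, dist (vb (n+1)) (vb (n+2)) ≤ (CS * L * M 0) * θ^n := by
    intro n
    rw [show vb (n+1) = T (vb n) from hvbsucc n,
        show vb (n+2) = T (vb (n+1)) from hvbsucc (n+1), dist_comm]
    calc dist (T (vb (n+1))) (T (vb n)) ≤ CS * L * dL2 (vb (n+1)) (vb n) := hsup _ _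
      _ = CS * L * M n := rfl
      _ ≤ CS * L * (θ^n * M 0) := mul_le_mul_of_nonneg_left (hMgeo n) (by positivity)
      _ = (CS * L * M 0) * θ^n := by ring
  have hcauchy : CauchySeq (fun n => vb (n+1)) :=
    cauchySeq_of_le_geometric θ (CS * L * M 0) hθ1 hdistgeo
  obtain ⟨u, hu⟩ := cauchySeq_tendsto_of_complete hcauchy
  have hu' : Filter.Tendsto vb Filter.atTop (nhds u) :=
    (Filter.tendsto_add_atTop_iff_nat 1).mp hu
  have hTcont : Continuous T := by
    apply LipschitzWith.continuous (K := Real.toNNReal (CS * L))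
    apply LipschitzWith.of_dist_le_mul
    intro v w
    rw [Real.coe_toNNReal _ (by positivity)]
    exact hTlip v w
  have hTbu : Filter.Tendsto (fun n => T (vb n)) Filter.atTop (nhds (T u)) :=
    (hTcont.tendsto u).comp hu'
  have heq : (fun n => T (vb n)) = fun n => vb (n+1) := funext fun n => (hvbsucc n).symm
  rw [heq] at hTbu
  have hfix : T u = u := tendsto_nhds_unique hTbu hu
  refine ⟨⇑u, u.continuous, fun t => ?_⟩
  conv_lhs => rw [← hfix]
  rw [hT]
  exact Tb_apply hΦc hωcont hsin u t



end BVP1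

namespace BVP1

lemma zero_of_integral_sq {F : ℝ → ℝ} (hF : Continuous F)
    (h : (∫ t in (0:ℝ)..1, (F t)^2) ≤ 0) : ∀ t ∈ Icc (0:ℝ) 1, F t = 0 := by
  set N := fun t => ∫ s in (0:ℝ)..t, (F s)^2 with hN
  have hNder : ∀ t, HasDerivAt N ((F t)^2) t := fun t => ftc (hF.pow 2) t
  have hNIcc : ∀ t ∈ Icc (0:ℝ) 1, N t = 0 := by
    intro t ht
    have h1 : 0 ≤ N t := intervalIntegral.integral_nonneg ht.1 (fun s _ => sq_nonneg _)
    have hsplit : N t + ∫ s in t..1, (F s)^2 = N 1 :=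
      intervalIntegral.integral_add_adjacent_intervals
        ((hF.pow 2).intervalIntegrable _ _) ((hF.pow 2).intervalIntegrable _ _)
    have h2 : 0 ≤ ∫ s in t..1, (F s)^2 :=
      intervalIntegral.integral_nonneg ht.2 (fun s _ => sq_nonneg _)
    have h3 : N 1 ≤ 0 := h
    linarith
  have hIoo : ∀ t ∈ Ioo (0:ℝ) 1, F t = 0 := by
    intro t ht
    have hmem : Icc (0:ℝ) 1 ∈ nhds t :=
      Filter.mem_of_superset (isOpen_Ioo.mem_nhds ht) Ioo_subset_Icc_self
    have hev : N =ᶠ[nhds t] (fun _ => (0:ℝ)) := by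
      filter_upwards [hmem] with s hs using hNIcc s hs
    have hconst : HasDerivAt N 0 t :=
      (hasDerivAt_const t (0:ℝ)).congr_of_eventuallyEq hev
    have huni := (hNder t).unique hconst
    exact pow_eq_zero_iff (two_ne_zero) |>.mp huni
  intro t ht
  have hcl : t ∈ closure (Ioo (0:ℝ) 1) := by
    rw [closure_Ioo (by norm_num : (0:ℝ) ≠ 1)]
    exact ht
  have hclosed : IsClosed {x : ℝ | F x = 0} := isClosed_eq hF continuous_const
  exact closure_minimal (fun x hx => hIoo x hx) hclosed hcl

end BVP1

open BVP1 Real Set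

set_option maxHeartbeats 1000000

/-- existence and uniqueness under the non-resonance condition
`π²m² < h ≤ ∂f/∂x ≤ k < π²(m+1)²`. -/
theorem stmt3 (f f' : ℝ → ℝ → ℝ)
    (hf : ContinuousOn (fun p : ℝ × ℝ => f p.1 p.2)
      (Set.Icc 0 1 ×ˢ (Set.univ : Set ℝ)))
    (hdiff : ∀ t ∈ Set.Icc (0:ℝ) 1, ∀ x : ℝ, HasDerivAt (fun z => f t z) (f' t x) x)
    (m : ℕ) (h k : ℝ)
    (hh : Real.pi ^ 2 * (m : ℝ) ^ 2 < h)
    (hbound : ∀ t ∈ Set.Icc (0:ℝ) 1, ∀ x : ℝ, h ≤ f' t x ∧ f' t x ≤ k)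
    (hk : k < Real.pi ^ 2 * ((m : ℝ) + 1) ^ 2)
    (ω : ℝ → ℝ) (hω : ContinuousOn ω (Set.Icc 0 1)) (hω0 : ω 0 = 0) :
    (∃ u u' : ℝ → ℝ, SolBVP1 f ω u u') ∧
    (∀ u u' v v' : ℝ → ℝ, SolBVP1 f ω u u' → SolBVP1 f ω v v' →
      Set.EqOn u v (Set.Icc 0 1)) := by
  have h0Icc : (0:ℝ) ∈ Icc (0:ℝ) 1 := by norm_num
  have h1Icc : (1:ℝ) ∈ Icc (0:ℝ) 1 := by norm_num
  have hhk : h ≤ k := le_trans (hbound 0 h0Icc 0).1 (hbound 0 h0Icc 0).2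
  have hπ : (0:ℝ) < π := Real.pi_pos
  set c : ℝ := (h + k) / 2 with hcdef
  set L : ℝ := (k - h) / 2 with hLdef
  set d : ℝ := min (c - π^2 * (m:ℝ)^2) (π^2 * ((m:ℝ)+1)^2 - c) with hddef
  have hm2 : (0:ℝ) ≤ π^2 * (m:ℝ)^2 := by positivity
  have hc1 : π^2 * (m:ℝ)^2 < c := by rw [hcdef]; linarith
  have hc2 : c < π^2 * ((m:ℝ)+1)^2 := by rw [hcdef]; linarith
  have hc0 : 0 < c := lt_of_le_of_lt hm2 hc1
  set σ : ℝ := Real.sqrt c with hσdef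
  have hσ2 : σ^2 = c := Real.sq_sqrt (le_of_lt hc0)
  have hσ0 : 0 < σ := Real.sqrt_pos.mpr hc0
  have hLd : L < d := by
    apply lt_min
    · rw [hLdef, hcdef]; linarith
    · rw [hLdef, hcdef]; linarith
  have hL0 : 0 ≤ L := by rw [hLdef]; linarith
  have hd0 : 0 < d := lt_of_le_of_lt hL0 hLd
  -- sin σ ≠ 0
  have hmπ : (m:ℝ) * π < σ := by
    by_contra hcon
    push_neg at hcon
    have h1 : σ^2 ≤ ((m:ℝ)*π)^2 := by
      have := mul_self_le_mul_self (le_of_lt hσ0) hcon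
      nlinarith
    rw [hσ2] at h1
    nlinarith
  have hσm1 : σ < ((m:ℝ)+1) * π := by
    by_contra hcon
    push_neg at hcon
    have hpos : (0:ℝ) ≤ ((m:ℝ)+1)*π := by positivity
    have h1 : (((m:ℝ)+1)*π)^2 ≤ σ^2 := by
      have := mul_self_le_mul_self hpos hcon
      nlinarith [this]
    rw [hσ2] at h1
    nlinarith
  have hsin : Real.sin σ ≠ 0 := by
    rw [Real.sin_ne_zero_iff]
    intro n hn
    have hn1 : (m:ℝ) * π < (n:ℝ) * π := by rw [hn]; exact hmπ
    have hn2 : (n:ℝ) * π < ((m:ℝ)+1) * π := by rw [hn]; exact hσm1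
    have hm1 : (m:ℝ) < (n:ℝ) := lt_of_mul_lt_mul_right hn1 (le_of_lt hπ)
    have hm2' : (n:ℝ) < (m:ℝ)+1 := lt_of_mul_lt_mul_right hn2 (le_of_lt hπ)
    have hz1 : (m:ℤ) < n := by exact_mod_cast hm1
    have hz2 : n < (m:ℤ) + 1 := by exact_mod_cast hm2'
    omega
  -- clamped data
  set F : ℝ → ℝ → ℝ := fun t x => f (cl t) x with hFdef
  have hFc : Continuous (fun p : ℝ × ℝ => F p.1 p.2) := by
    have : Continuous ((fun p : ℝ × ℝ => f p.1 p.2) ∘ (fun p : ℝ × ℝ => (cl p.1, p.2))) :=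
      hf.comp_continuous ((cl_continuous.comp continuous_fst).prodMk continuous_snd)
        (fun p => ⟨cl_mem _, trivial⟩)
    exact this
  set ωc : ℝ → ℝ := fun t => ω (cl t) with hωcdef
  have hωc : Continuous ωc := hω.comp_continuous cl_continuous cl_mem
  have hcl0 : cl 0 = 0 := cl_eq_self h0Icc
  have hcl1 : cl 1 = 1 := cl_eq_self h1Icc
  have hωc0 : ωc 0 = 0 := by rw [hωcdef]; simp only; rw [hcl0, hω0]
  set Φ : ℝ → ℝ → ℝ := fun t x => c * x - F t x with hΦdef
  have hΦc : Continuous (fun p : ℝ × ℝ => Φ p.1 p.2) :=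
    (continuous_const.mul continuous_snd).sub hFc
  have hΦlip : ∀ t x y : ℝ, |Φ t x - Φ t y| ≤ L * |x - y| := by
    intro t x y
    have hder : ∀ z : ℝ, HasDerivAt (fun x => c * x - f (cl t) x) (c - f' (cl t) z) z := by
      intro z
      have h1 : HasDerivAt (fun x : ℝ => c * x) c z := by
        simpa using (hasDerivAt_id z).const_mul c
      exact h1.sub (hdiff (cl t) (cl_mem t) z)
    have key := Convex.norm_image_sub_le_of_norm_hasDerivWithin_le
      (f := fun x : ℝ => c * x - f (cl t) x) (f' := fun z => c - f' (cl t) z)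
      (s := Set.univ) (C := L)
      (fun z _ => (hder z).hasDerivWithinAt)
      (fun z _ => by
        rw [Real.norm_eq_abs, abs_le]
        have hb1 := (hbound (cl t) (cl_mem t) z).1
        have hb2 := (hbound (cl t) (cl_mem t) z).2
        constructor
        · linarith
        · linarith)
      convex_univ (Set.mem_univ y) (Set.mem_univ x)
    rw [Real.norm_eq_abs, Real.norm_eq_abs] at key
    exact key
  -- existence
  obtain ⟨u, huc, hufix⟩ := exists_fixed_point hΦc hωc hsin c L d m hσ2 hc1 hc2 hddef hLd hL0 hΦlip
  set ψu : ℝ → ℝ := psif Φ ωc u with hψudef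
  have hψc : Continuous ψu := psif_cont hΦc hωc huc
  set uD : ℝ → ℝ := Sop' σ ψu with huDdef
  have huIcc : ∀ t ∈ Icc (0:ℝ) 1, u t = Sop σ ψu t := by
    intro t ht
    rw [hufix t, cl_eq_self ht]
  have hFu_cont : Continuous (fun s => F s (u s)) := Gf_cont hFc huc
  constructor
  · refine ⟨u, uD, ?_, ?_, ?_, ?_, ?_⟩
    · intro t ht
      apply HasDerivWithinAt.congr ((Sop_hasDeriv hψc t).hasDerivWithinAt)
        (fun y hy => huIcc y hy) (huIcc t ht)
    · exact (Sop'_cont hψc).continuousOn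
    · rw [hufix 0, hcl0, Sop_zero]
    · rw [hufix 1, hcl1, Sop_one hsin]
    · intro t ht
      have huIcct : ∀ s ∈ uIcc (0:ℝ) t, s ∈ Icc (0:ℝ) 1 := by
        intro s hs
        rw [Set.uIcc_of_le ht.1] at hs
        exact ⟨hs.1, le_trans hs.2 ht.2⟩
      have hIf : ∫ s in (0:ℝ)..t, f s (u s) = ∫ s in (0:ℝ)..t, F s (u s) := by
        apply intervalIntegral.integral_congr
        intro s hs
        have hsI := huIcct s hs
        show f s (u s) = F s (u s)
        rw [hFdef]
        simp only
        rw [cl_eq_self hsI]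
      have hid := Sop_identity (σ := σ) hψc t
      have hψ0 : ψu 0 = 0 := by
        rw [hψudef]
        unfold psif
        simp [hωc0]
      have hSopInt : (∫ s in (0:ℝ)..t, Sop σ ψu s) = ∫ s in (0:ℝ)..t, u s := by
        apply intervalIntegral.integral_congr
        intro s hs
        exact (huIcc s (huIcct s hs)).symm
      rw [hσ2, hSopInt, hψ0] at hid
      have hψt : ψu t = ω t + ∫ s in (0:ℝ)..t, Φ s (u s) := by
        rw [hψudef]
        unfold psif
        rw [hωcdef]
        simp only
        rw [cl_eq_self ht]
      have e5 : (∫ s in (0:ℝ)..t, Φ s (u s))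
          = c * (∫ s in (0:ℝ)..t, u s) - ∫ s in (0:ℝ)..t, F s (u s) := by
        rw [hΦdef]
        simp only
        rw [intervalIntegral.integral_sub (f := fun s => c * u s) (g := fun s => F s (u s))
          ((continuous_const.mul huc).intervalIntegrable _ _)
          (hFu_cont.intervalIntegrable _ _), intervalIntegral.integral_const_mul]
      rw [hIf]
      rw [hψt, e5] at hid
      rw [huDdef]
      linarith [hid]
  · -- uniqueness
    intro u u' v v' hu hv
    obtain ⟨hu1, hu2, hu3, hu4, hu5⟩ := hu
    obtain ⟨hv1, hv2, hv3, hv4, hv5⟩ := hv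
    have hucont : ContinuousOn u (Icc 0 1) := fun t ht => (hu1 t ht).continuousWithinAt
    have hvcont : ContinuousOn v (Icc 0 1) := fun t ht => (hv1 t ht).continuousWithinAt
    set uc : ℝ → ℝ := fun s => u (cl s) with hucdef
    set vc : ℝ → ℝ := fun s => v (cl s) with hvcdef
    have hucc : Continuous uc := hucont.comp_continuous cl_continuous cl_mem
    have hvcc : Continuous vc := hvcont.comp_continuous cl_continuous cl_mem
    set g : ℝ → ℝ := fun s => F s (uc s) - F s (vc s) with hgdef
    have hgc : Continuous g := (Gf_cont hFc hucc).sub (Gf_cont hFc hvcc)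
    have hIg : Continuous (fun s => ∫ r in (0:ℝ)..s, g r) :=
      continuous_iff_continuousAt.2 fun x => (ftc hgc x).continuousAt
    set η : ℝ → ℝ := fun t => (u' 0 - v' 0) * t - ∫ s in (0:ℝ)..t, ∫ r in (0:ℝ)..s, g r
      with hηdef
    set ηD : ℝ → ℝ := fun t => (u' 0 - v' 0) - ∫ r in (0:ℝ)..t, g r with hηDdef
    have hη' : ∀ t, HasDerivAt η (ηD t) t := by
      intro t
      have ha : HasDerivAt (fun t : ℝ => (u' 0 - v' 0) * t) (u' 0 - v' 0) t := by
        simpa using (hasDerivAt_id t).const_mul (u' 0 - v' 0)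
      exact ha.sub (ftc hIg t)
    have hη'' : ∀ t, HasDerivAt ηD (-(g t)) t := by
      intro t
      have hb : HasDerivAt (fun t : ℝ => ∫ r in (0:ℝ)..t, g r) (g t) t := ftc hgc t
      exact ((hasDerivAt_const (x := t) (c := u' 0 - v' 0)).sub hb).congr_deriv (zero_sub _)
    have hηc : Continuous η := continuous_iff_continuousAt.2 fun x => (hη' x).continuousAt
    have hη0 : η 0 = 0 := by rw [hηdef]; simp
    have hgI : ∀ s ∈ Icc (0:ℝ) 1, g s = f s (u s) - f s (v s) := by
      intro s hs
      rw [hgdef, hFdef, hucdef, hvcdef]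
      simp only
      rw [cl_eq_self hs]
    have hder_eq : ∀ t ∈ Icc (0:ℝ) 1, u' t - v' t = ηD t := by
      intro t ht
      have huIcct : ∀ s ∈ uIcc (0:ℝ) t, s ∈ Icc (0:ℝ) 1 := by
        intro s hs
        rw [Set.uIcc_of_le ht.1] at hs
        exact ⟨hs.1, le_trans hs.2 ht.2⟩
      have hIu : (∫ s in (0:ℝ)..t, f s (u s)) = ∫ s in (0:ℝ)..t, F s (uc s) := by
        apply intervalIntegral.integral_congr
        intro s hs
        have hsI := huIcct s hs
        rw [hFdef, hucdef]
        simp only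
        rw [cl_eq_self hsI]
      have hIv : (∫ s in (0:ℝ)..t, f s (v s)) = ∫ s in (0:ℝ)..t, F s (vc s) := by
        apply intervalIntegral.integral_congr
        intro s hs
        have hsI := huIcct s hs
        rw [hFdef, hvcdef]
        simp only
        rw [cl_eq_self hsI]
      have hsplit : (∫ r in (0:ℝ)..t, g r)
          = (∫ s in (0:ℝ)..t, F s (uc s)) - ∫ s in (0:ℝ)..t, F s (vc s) := by
        rw [hgdef]
        exact intervalIntegral.integral_sub ((Gf_cont hFc hucc).intervalIntegrable _ _)
          ((Gf_cont hFc hvcc).intervalIntegrable _ _)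
      have e1 := hu5 t ht
      have e2 := hv5 t ht
      rw [hηDdef]
      simp only
      rw [hsplit, ← hIu, ← hIv]
      linarith [e1, e2]
    have hDzero : ∀ t ∈ Icc (0:ℝ) 1, (u t - v t) - η t = 0 := by
      have hDder : ∀ t ∈ Icc (0:ℝ) 1,
          HasDerivWithinAt (fun y => (u y - v y) - η y) 0 (Icc 0 1) t := by
        intro t ht
        have h1 := ((hu1 t ht).sub (hv1 t ht)).sub ((hη' t).hasDerivWithinAt)
        refine h1.congr_deriv ?_
        rw [hder_eq t ht]
        ring
      intro t ht
      have key := Convex.norm_image_sub_le_of_norm_hasDerivWithin_le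
        (f := fun y => (u y - v y) - η y) (f' := fun _ => (0:ℝ)) (s := Icc (0:ℝ) 1) (C := 0)
        hDder (fun z _ => by simp) (convex_Icc 0 1) h0Icc ht
      have h00 : (u 0 - v 0) - η 0 = 0 := by rw [hu3, hv3, hη0]; ring
      rw [h00, sub_zero, zero_mul, Real.norm_eq_abs] at key
      have hnn := abs_nonneg ((u t - v t) - η t)
      exact abs_eq_zero.mp (le_antisymm key hnn)
    have hηeq : ∀ t ∈ Icc (0:ℝ) 1, u t - v t = η t := by
      intro t ht
      have := hDzero t ht
      linarith
    have hηIcc1 : η 1 = 0 := by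
      have := hηeq 1 h1Icc
      rw [hu4, hv4] at this
      linarith
    have hptw : ∀ t ∈ Icc (0:ℝ) 1, |(-(g t)) + c * η t| ≤ L * |η t| := by
      intro t ht
      have e1 : (-(g t)) + c * η t = Φ t (u t) - Φ t (v t) := by
        rw [hgI t ht, ← hηeq t ht, hΦdef, hFdef]
        simp only
        rw [cl_eq_self ht]
        ring
      rw [e1, ← hηeq t ht]
      exact hΦlip t (u t) (v t)
    have hkey := key_estimate c m hc1 hc2 hη' hη'' hgc.neg hη0 hηIcc1
    rw [← hddef] at hkey
    have hmono : (∫ t in (0:ℝ)..1, ((-(g t)) + c * η t)^2)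
        ≤ L^2 * ∫ t in (0:ℝ)..1, (η t)^2 := by
      rw [← intervalIntegral.integral_const_mul]
      apply intervalIntegral.integral_mono_on (by norm_num)
        ((((hgc.neg).add (continuous_const.mul hηc)).pow 2).intervalIntegrable _ _)
        ((continuous_const.mul (hηc.pow 2)).intervalIntegrable _ _)
      intro s hs
      have hp := hptw s hs
      calc ((-(g s)) + c * η s)^2 = |(-(g s)) + c * η s|^2 := (sq_abs _).symm
        _ ≤ (L * |η s|)^2 := pow_le_pow_left₀ (abs_nonneg _) hp 2
        _ = L^2 * (η s)^2 := by rw [mul_pow, sq_abs]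
    have hint_nonneg : 0 ≤ ∫ t in (0:ℝ)..1, (η t)^2 :=
      intervalIntegral.integral_nonneg (by norm_num) fun s _ => sq_nonneg _
    have hdL : 0 < (d - L) * (d + L) := mul_pos (by linarith) (by linarith)
    have hzero : (∫ t in (0:ℝ)..1, (η t)^2) ≤ 0 := by
      nlinarith [hkey, hmono, hint_nonneg, hdL]
    have hη_zero := zero_of_integral_sq hηc hzero
    intro t ht
    have heq := hηeq t ht
    rw [hη_zero t ht] at heq
    have : u t - v t = 0 := heq
    linarith
end

section
/- Let M be a real Hilbert space and K : M → M a compact, symmetric (self-adjoint), positive definite linear operator whose eigenvalues, listed as reciprocals, are 1/λ₁ ≥ 1/λ₂ ≥ … with 0 < λ₁ ≤ λ₂ ≤ … ≤ λ_n ≤ … (each counted according to multiplicity). Let 𝒜 be a family of bounded symmetric (self-adjoint) linear operators on M and suppose there exist an index n and real numbers μ_n, μ_{n+1} with λ_n < μ_n, μ_{n+1} < λ_{n+1}, and μ_n⟨x,x⟩ ≤ ⟨Ax,x⟩ ≤ μ_{n+1}⟨x,x⟩ for all x ∈ M and all A ∈ 𝒜. Then for each A ∈ 𝒜 the operator I -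 K∘A has a bounded inverse, and there exists N > 0 such that ‖(I - K∘A)⁻¹‖ ≤ N for all A ∈ 𝒜. -/
open scoped RealInnerProductSpace
open Filter Topology

/-- A symmetric operator whose quadratic form is bounded by `b‖x‖²` has norm at most `b`. -/
lemma sym_norm_le' {M : Type*} [NormedAddCommGroup M] [InnerProductSpace ℝ M]
    (S : M →L[ℝ] M) (hS : ∀ x y : M, ⟪S x, y⟫ = ⟪x, S y⟫) {b : ℝ} (hb : 0 ≤ b)
    (h : ∀ x : M, |⟪S x, x⟫| ≤ b * ‖x‖ ^ 2) : ‖S‖ ≤ b := by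
  refine S.opNorm_le_bound hb fun x => ?_
  rcases eq_or_ne (S x) 0 with h0 | h0
  · simp [h0]
    positivity
  have hx : x ≠ 0 := fun h' => h0 (by simp [h'])
  have hxn : (0:ℝ) < ‖x‖ := norm_pos_iff.2 hx
  have hSxn : (0:ℝ) < ‖S x‖ := norm_pos_iff.2 h0
  set y := (‖x‖ / ‖S x‖) • S x with hy
  have hyn : ‖y‖ = ‖x‖ := by
    rw [hy, norm_smul, Real.norm_eq_abs, abs_of_nonneg (by positivity)]
    field_simp
  have hin : ⟪S x, y⟫ = ‖x‖ * ‖S x‖ := by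
    rw [hy, real_inner_smul_right, real_inner_self_eq_norm_sq]
    field_simp
  have hpol : 4 * ⟪S x, y⟫ = ⟪S (x + y), x + y⟫ - ⟪S (x - y), x - y⟫ := by
    have h1 : ⟪S y, x⟫ = ⟪S x, y⟫ := by rw [hS y x, real_inner_comm]
    simp only [map_add, map_sub, inner_add_left, inner_add_right, inner_sub_left,
      inner_sub_right]
    linarith
  have habs1 : ⟪S (x+y), x+y⟫ ≤ b * ‖x+y‖^2 := (abs_le.1 (h (x+y))).2
  have habs2 : -(b * ‖x-y‖^2) ≤ ⟪S (x-y), x-y⟫ := (abs_le.1 (h (x-y))).1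
  have hpar := parallelogram_law_with_norm ℝ x y
  have e1 : ‖x+y‖^2 + ‖x-y‖^2 = 4 * ‖x‖^2 := by
    have hyn2 : ‖y‖ * ‖y‖ = ‖x‖ * ‖x‖ := by rw [hyn]
    rw [pow_two, pow_two, pow_two]
    linarith
  have e1b : b * (‖x+y‖^2 + ‖x-y‖^2) = 4 * b * ‖x‖^2 := by rw [e1]; ring
  have e2 : 4 * (‖x‖ * ‖S x‖) ≤ 4 * b * ‖x‖^2 := by nlinarith [hpol, hin, habs1, habs2, e1b]
  nlinarith [e2, hxn]

/-- A nonzero approximate eigenvalue of a compact operator is an eigenvalue. -/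
lemma approx_eig' {M : Type*} [NormedAddCommGroup M] [InnerProductSpace ℝ M]
    (T : M →L[ℝ] M) (hT : IsCompactOperator (T : M → M)) {c : ℝ} (hc : c ≠ 0)
    {u : ℕ → M} (hu : ∀ k, ‖u k‖ = 1)
    (hconv : Tendsto (fun k => T (u k) - c • u k) atTop (𝓝 0)) :
    ∃ x : M, x ≠ 0 ∧ T x = c • x := by
  have hbdd : Bornology.IsBounded (Set.range u) :=
    isBounded_iff_forall_norm_le.2 ⟨1, by rintro _ ⟨k, rfl⟩; exact (hu k).le⟩
  have hcmp : IsCompact (closure ((T : M →ₗ[ℝ] M) '' Set.range u)) :=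
    IsCompactOperator.isCompact_closure_image_of_bounded (by exact hT) hbdd
  have hmem : ∀ k, T (u k) ∈ closure ((T : M →ₗ[ℝ] M) '' Set.range u) := fun k =>
    subset_closure ⟨u k, Set.mem_range_self k, rfl⟩
  obtain ⟨y, -, φ, hφ, hty⟩ := hcmp.tendsto_subseq hmem
  have hconv' : Tendsto (fun k => T (u (φ k)) - c • u (φ k)) atTop (𝓝 0) :=
    hconv.comp hφ.tendsto_atTop
  have hcu : Tendsto (fun k => c • u (φ k)) atTop (𝓝 y) := by
    have := hty.sub hconv'
    simpa using this
  have hu' : Tendsto (fun k => u (φ k)) atTop (𝓝 (c⁻¹ • y)) := by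
    have := hcu.const_smul c⁻¹
    simpa [smul_smul, inv_mul_cancel₀ hc] using this
  set x := c⁻¹ • y with hxdef
  have hxn : ‖x‖ = 1 := by
    have h1 : Tendsto (fun k => ‖u (φ k)‖) atTop (𝓝 ‖x‖) := hu'.norm
    have h2 : Tendsto (fun k => ‖u (φ k)‖) atTop (𝓝 1) := by
      simpa [hu] using (tendsto_const_nhds : Tendsto (fun _ : ℕ => (1:ℝ)) atTop (𝓝 1))
    exact tendsto_nhds_unique h1 h2
  have hx0 : x ≠ 0 := by
    intro h
    rw [h, norm_zero] at hxn
    norm_num at hxn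
  refine ⟨x, hx0, ?_⟩
  have hTx : Tendsto (fun k => T (u (φ k))) atTop (𝓝 (T x)) := (T.continuous.tendsto x).comp hu'
  have hTxy : T x = y := tendsto_nhds_unique hTx hty
  rw [hTxy, hxdef, smul_smul, mul_inv_cancel₀ hc, one_smul]

set_option maxHeartbeats 1000000 in
/-- uniform invertibility of `I - K∘A` for a family of self-adjoint
operators `A` pinched between consecutive eigenvalues of the compact, symmetric,
positive definite operator `K`. -/
theorem stmt4 {M : Type*} [NormedAddCommGroup M] [InnerProductSpace ℝ M]
    [CompleteSpace M]
    (K : M →L[ℝ] M) (hcpt : IsCompactOperator (K : M → M))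
    (hsym : ∀ x y : M, ⟪K x, y⟫ = ⟪x, K y⟫)
    (hposdef : ∀ x : M, x ≠ 0 → 0 < ⟪K x, x⟫)
    (lam : ℕ → ℝ) (hlampos : ∀ i, 0 < lam i) (hlammono : Monotone lam)
    (heig : ∀ i, ∃ x : M, x ≠ 0 ∧ K x = (1 / lam i) • x)
    (hall : ∀ c : ℝ, (∃ x : M, x ≠ 0 ∧ K x = c • x) → ∃ i, c = 1 / lam i)
    (n : ℕ) (μn μn1 : ℝ) (h1 : lam n < μn) (h2 : μn1 < lam (n + 1))
    (𝒜 : Set (M →L[ℝ] M))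
    (hA : ∀ A ∈ 𝒜, (∀ x y : M, ⟪A x, y⟫ = ⟪x, A y⟫) ∧
      ∀ x : M, μn * ⟪x, x⟫ ≤ ⟪A x, x⟫ ∧ ⟪A x, x⟫ ≤ μn1 * ⟪x, x⟫) :
    ∃ N : ℝ, 0 < N ∧ ∀ A ∈ 𝒜, ∃ B : M →L[ℝ] M,
      B * (1 - K * A) = 1 ∧ (1 - K * A) * B = 1 ∧ ‖B‖ ≤ N := by
  classical
  rcases Set.eq_empty_or_nonempty 𝒜 with hempty | ⟨A₀, hA₀⟩
  · exact ⟨1, one_pos, by simp [hempty]⟩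
  obtain ⟨x₀, hx₀, -⟩ := heig 0
  haveI : Nontrivial M := ⟨x₀, 0, hx₀⟩
  have hμle : μn ≤ μn1 := by
    obtain ⟨-, h2'⟩ := hA A₀ hA₀
    obtain ⟨ha, hb⟩ := h2' x₀
    have hx2 : 0 < ⟪x₀, x₀⟫ := by
      rw [real_inner_self_eq_norm_sq]
      exact pow_pos (norm_pos_iff.2 hx₀) 2
    nlinarith [le_trans ha hb]
  set μ : ℝ := (μn + μn1) / 2 with hμdef
  set r : ℝ := (μn1 - μn) / 2 with hrdef
  have hr0 : 0 ≤ r := by rw [hrdef]; linarith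
  have hμ1 : lam n < μ := by rw [hμdef]; linarith
  have hμ2 : μ < lam (n+1) := by rw [hμdef]; linarith
  have hμ0 : 0 < μ := (hlampos n).trans hμ1
  set δ : ℝ := min (μ - lam n) (lam (n+1) - μ) with hδdef
  have hδ0 : 0 < δ := lt_min (by linarith) (by linarith)
  have hrδ : r < δ := lt_min (by rw [hrdef, hμdef]; linarith) (by rw [hrdef, hμdef]; linarith)
  set J : M →L[ℝ] M := 1 - μ • K with hJdef
  have hJapp : ∀ x, J x = x - μ • K x := fun x => by
    rw [hJdef]
    simp
  have hJsym : ∀ x y, ⟪J x, y⟫ = ⟪x, J y⟫ := by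
    intro x y
    rw [hJapp, hJapp, inner_sub_left, inner_sub_right, real_inner_smul_left,
      real_inner_smul_right, hsym]
  -- μ⁻¹ is not an eigenvalue of K
  have hnoeig : ∀ x : M, K x = μ⁻¹ • x → x = 0 := by
    intro x hx
    by_contra hx0
    obtain ⟨i, hi⟩ := hall μ⁻¹ ⟨x, hx0, hx⟩
    rw [one_div] at hi
    have hmui : μ = lam i := inv_injective hi
    rcases le_or_gt i n with h | h
    · have := hlammono h
      linarith
    · have := hlammono (Nat.succ_le_of_lt h)
      linarith
  -- J is bounded below
  have hbelow : ∃ c : ℝ, 0 < c ∧ ∀ x, c * ‖x‖ ≤ ‖J x‖ := by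
    by_contra hcon
    push_neg at hcon
    have hseq : ∀ k : ℕ, ∃ x : M, ‖x‖ = 1 ∧ ‖J x‖ < 1 / ((k:ℝ) + 1) := by
      intro k
      obtain ⟨x, hx⟩ := hcon (1 / ((k:ℝ)+1)) (by positivity)
      have hx0 : x ≠ 0 := by
        rintro rfl
        simp at hx
      have hxn : (0:ℝ) < ‖x‖ := norm_pos_iff.2 hx0
      refine ⟨‖x‖⁻¹ • x, ?_, ?_⟩
      · rw [norm_smul, Real.norm_eq_abs, abs_of_nonneg (by positivity),
          inv_mul_cancel₀ hxn.ne']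
      · rw [map_smul, norm_smul, Real.norm_eq_abs, abs_of_nonneg (by positivity)]
        rw [inv_mul_lt_iff₀ hxn]
        calc ‖J x‖ < 1 / ((k:ℝ)+1) * ‖x‖ := hx
          _ = ‖x‖ * (1 / ((k:ℝ)+1)) := by ring
    choose u hu1 hu2 using hseq
    have hconv : Tendsto (fun k => (μ • K) (u k) - (1:ℝ) • u k) atTop (𝓝 0) := by
      rw [tendsto_zero_iff_norm_tendsto_zero]
      refine squeeze_zero (fun k => norm_nonneg _) (fun k => ?_)
        tendsto_one_div_add_atTop_nhds_zero_nat
      have heq : (μ • K) (u k) - (1:ℝ) • u k = -(J (u k)) := by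
        rw [hJapp]
        simp
      rw [heq, norm_neg]
      exact (hu2 k).le
    obtain ⟨x, hx0, hx⟩ := approx_eig' (μ • K) (by simpa using hcpt.smul μ) one_ne_zero hu1 hconv
    apply hx0
    apply hnoeig
    have : μ • K x = x := by
      rw [one_smul] at hx
      simpa using hx
    calc K x = (μ⁻¹ * μ) • K x := by rw [inv_mul_cancel₀ hμ0.ne', one_smul]
      _ = μ⁻¹ • (μ • K x) := by rw [mul_smul]
      _ = μ⁻¹ • x := by rw [this]
  obtain ⟨c₀, hc₀, hcJ⟩ := hbelow
  -- J is bijective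
  have hker : LinearMap.ker (J : M →ₗ[ℝ] M) = ⊥ := by
    rw [LinearMap.ker_eq_bot']
    intro x hx
    have := hcJ x
    rw [show J x = 0 from hx, norm_zero] at this
    have : ‖x‖ ≤ 0 := by nlinarith
    exact norm_le_zero_iff.1 this
  have hanti : AntilipschitzWith (⟨c₀, hc₀.le⟩ : NNReal)⁻¹ J := by
    apply ContinuousLinearMap.antilipschitz_of_bound
    intro x
    show ‖x‖ ≤ ((⟨c₀, hc₀.le⟩ : NNReal) : ℝ)⁻¹ * ‖J x‖
    rw [le_inv_mul_iff₀ (by exact_mod_cast hc₀)]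
    exact_mod_cast hcJ x
  have hclosed : IsClosed (Set.range (J : M → M)) :=
    hanti.isClosed_range J.uniformContinuous
  have hrange : LinearMap.range (J : M →ₗ[ℝ] M) = ⊤ := by
    haveI : CompleteSpace (LinearMap.range (J : M →ₗ[ℝ] M)) := by
      apply IsClosed.completeSpace_coe (hs := ?_)
      show IsClosed ((LinearMap.range (J : M →ₗ[ℝ] M) : Submodule ℝ M) : Set M)
      rw [LinearMap.coe_range]
      exact hclosed
    rw [← Submodule.orthogonal_eq_bot_iff]
    rw [Submodule.eq_bot_iff]
    intro y hy
    have h1 : ⟪J (J y), y⟫ = 0 :=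
      (Submodule.mem_orthogonal _ y).1 hy _ (LinearMap.mem_range_self _ (J y))
    rw [hJsym] at h1
    have hJy : J y = 0 := inner_self_eq_zero.1 h1
    have : y ∈ LinearMap.ker (J : M →ₗ[ℝ] M) := hJy
    rw [hker] at this
    exact this
  set Ji : M →L[ℝ] M := ((ContinuousLinearEquiv.ofBijective J hker hrange).symm : M →L[ℝ] M)
    with hJidef
  have hJiJ : ∀ x, Ji (J x) = x := fun x =>
    ContinuousLinearEquiv.ofBijective_symm_apply_apply J hker hrange x
  have hJJi : ∀ x, J (Ji x) = x := fun x =>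
    ContinuousLinearEquiv.ofBijective_apply_symm_apply J hker hrange x
  have hJiJ1 : Ji * J = 1 := by
    ext x
    exact hJiJ x
  have hJJi1 : J * Ji = 1 := by
    ext x
    exact hJJi x
  have hJisym : ∀ x y, ⟪Ji x, y⟫ = ⟪x, Ji y⟫ := by
    intro x y
    calc ⟪Ji x, y⟫ = ⟪Ji x, J (Ji y)⟫ := by rw [hJJi]
      _ = ⟪J (Ji x), Ji y⟫ := (hJsym _ _).symm
      _ = ⟪x, Ji y⟫ := by rw [hJJi]
  have hJK : ∀ x, J (K x) = K (J x) := by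
    intro x
    rw [hJapp, hJapp, map_sub, map_smul]
  have hJiK : ∀ x, Ji (K x) = K (Ji x) := by
    intro x
    conv_lhs => rw [← hJJi x]
    rw [← hJK, hJiJ]
  set C : M →L[ℝ] M := Ji * K with hCdef
  have hCapp : ∀ x, C x = Ji (K x) := fun x => rfl
  have hCsym : ∀ x y, ⟪C x, y⟫ = ⟪x, C y⟫ := by
    intro x y
    rw [hCapp, hCapp, hJisym, hsym, hJiK]
  have hCcpt : IsCompactOperator (C : M → M) := by
    have h := hcpt.continuous_comp Ji.continuous
    exact h
  -- norm bound on C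
  have hCnorm : ‖C‖ ≤ 1/δ := by
    by_contra hcon
    push_neg at hcon
    have hC0 : (0:ℝ) < ‖C‖ := lt_trans (by positivity) hcon
    have hseq : ∀ k : ℕ, ∃ x : M, ‖x‖ = 1 ∧
        ‖C‖ * (1 - 1/((k:ℝ)+1)) < |⟪C x, x⟫| := by
      intro k
      by_contra hk
      push_neg at hk
      have hk1 : 1/((k:ℝ)+1) ≤ 1 := by
        rw [div_le_one (by positivity)]
        simp [Nat.cast_nonneg]
      have hb : (0:ℝ) ≤ ‖C‖ * (1 - 1/((k:ℝ)+1)) := by nlinarith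
      have hle : ‖C‖ ≤ ‖C‖ * (1 - 1/((k:ℝ)+1)) := by
        apply sym_norm_le' C hCsym hb
        intro x
        rcases eq_or_ne x 0 with rfl | hx0
        · simp
        · have hxn : (0:ℝ) < ‖x‖ := norm_pos_iff.2 hx0
          have hux : ‖(‖x‖⁻¹ • x)‖ = 1 := by
            rw [norm_smul, Real.norm_eq_abs, abs_of_nonneg (by positivity),
              inv_mul_cancel₀ hxn.ne']
          have h2 := hk _ hux
          have h3 : ⟪C (‖x‖⁻¹ • x), (‖x‖⁻¹ • x)⟫ = ‖x‖⁻¹ * (‖x‖⁻¹ * ⟪C x, x⟫) := by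
            rw [map_smul, real_inner_smul_left, real_inner_smul_right]
          rw [h3, abs_mul, abs_mul, abs_of_nonneg (by positivity : (0:ℝ) ≤ ‖x‖⁻¹)] at h2
          have h6 := mul_le_mul_of_nonneg_left h2 (mul_pos hxn hxn).le
          calc |⟪C x, x⟫| = (‖x‖ * ‖x‖) * (‖x‖⁻¹ * (‖x‖⁻¹ * |⟪C x, x⟫|)) := by
                field_simp
            _ ≤ (‖x‖ * ‖x‖) * (‖C‖ * (1 - 1/((k:ℝ)+1))) := h6
            _ = ‖C‖ * (1 - 1/((k:ℝ)+1)) * ‖x‖^2 := by ring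
      have hpos : (0:ℝ) < ‖C‖ * (1/((k:ℝ)+1)) := by positivity
      nlinarith
    choose u hu1 hu2 using hseq
    have ha_le : ∀ k, |⟪C (u k), u k⟫| ≤ ‖C‖ := by
      intro k
      calc |⟪C (u k), u k⟫| ≤ ‖C (u k)‖ * ‖u k‖ := abs_real_inner_le_norm _ _
        _ ≤ (‖C‖ * ‖u k‖) * ‖u k‖ :=
            mul_le_mul_of_nonneg_right (C.le_opNorm (u k)) (norm_nonneg _)
        _ = ‖C‖ := by rw [hu1]; ring
    have hmem : ∀ k, ⟪C (u k), u k⟫ ∈ Set.Icc (-‖C‖) ‖C‖ := fun k => abs_le.1 (ha_le k)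
    obtain ⟨c, -, φ, hφ, hac0⟩ :=
      (isCompact_Icc (a := -‖C‖) (b := ‖C‖)).tendsto_subseq hmem
    have hac : Tendsto (fun k => ⟪C (u (φ k)), u (φ k)⟫) atTop (𝓝 c) := by
      exact hac0
    have habs : Tendsto (fun k => |⟪C (u (φ k)), u (φ k)⟫|) atTop (𝓝 |c|) := hac.abs
    have hc_eq : |c| = ‖C‖ := by
      have hle1 : |c| ≤ ‖C‖ := le_of_tendsto habs (Filter.Eventually.of_forall fun k => ha_le _)
      have h0 : Tendsto (fun k : ℕ => 1/((φ k:ℝ)+1)) atTop (𝓝 0) := by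
        apply squeeze_zero (fun k => by positivity) (fun k => ?_)
          tendsto_one_div_add_atTop_nhds_zero_nat
        apply one_div_le_one_div_of_le (by positivity)
        have : (k:ℝ) ≤ (φ k : ℝ) := by exact_mod_cast hφ.le_apply
        linarith
      have hk2 : Tendsto (fun k : ℕ => ‖C‖ * (1 - 1/((φ k:ℝ)+1))) atTop (𝓝 (‖C‖ * (1 - 0))) :=
        tendsto_const_nhds.mul (tendsto_const_nhds.sub h0)
      have hge : ‖C‖ * (1 - 0) ≤ |c| :=
        le_of_tendsto_of_tendsto' hk2 habs fun k => (hu2 (φ k)).le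
      rw [sub_zero, mul_one] at hge
      linarith
    have hc0 : c ≠ 0 := by
      intro h
      rw [h, abs_zero] at hc_eq
      exact hC0.ne' hc_eq.symm
    have hc2 : c^2 = ‖C‖^2 := by rw [← sq_abs, hc_eq]
    have hdiff : Tendsto (fun k => C (u (φ k)) - c • u (φ k)) atTop (𝓝 0) := by
      have hsqle : ∀ k, ‖C (u (φ k)) - c • u (φ k)‖^2
          ≤ ‖C‖^2 + c^2 - 2*(c * ⟪C (u (φ k)), u (φ k)⟫) := by
        intro k
        have hnn : ‖C (u (φ k))‖ ≤ ‖C‖ := by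
          have := C.le_opNorm (u (φ k))
          rwa [hu1, mul_one] at this
        have hexp : ‖C (u (φ k)) - c • u (φ k)‖^2
            = ‖C (u (φ k))‖^2 - 2*(c * ⟪C (u (φ k)), u (φ k)⟫) + c^2 := by
          rw [norm_sub_sq_real, real_inner_smul_right, norm_smul, Real.norm_eq_abs, hu1,
            mul_one, sq_abs]
        nlinarith [norm_nonneg (C (u (φ k)))]
      have hlim : Tendsto (fun k => ‖C‖^2 + c^2 - 2*(c * ⟪C (u (φ k)), u (φ k)⟫)) atTop
          (𝓝 0) := by
        have h5 : Tendsto (fun k => ‖C‖^2 + c^2 - 2*(c * ⟪C (u (φ k)), u (φ k)⟫)) atTop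
            (𝓝 (‖C‖^2 + c^2 - 2*(c * c))) :=
          tendsto_const_nhds.sub ((hac.const_mul c).const_mul 2)
        have h6 : ‖C‖^2 + c^2 - 2*(c*c) = 0 := by nlinarith
        rwa [h6] at h5
      have hnormsq : Tendsto (fun k => ‖C (u (φ k)) - c • u (φ k)‖^2) atTop (𝓝 0) :=
        squeeze_zero (fun k => by positivity) hsqle hlim
      rw [tendsto_zero_iff_norm_tendsto_zero]
      have h7 : Tendsto (fun k => Real.sqrt (‖C (u (φ k)) - c • u (φ k)‖^2)) atTop
          (𝓝 (Real.sqrt 0)) := (Real.continuous_sqrt.tendsto 0).comp hnormsq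
      rw [Real.sqrt_zero] at h7
      exact h7.congr fun k => Real.sqrt_sq (norm_nonneg _)
    obtain ⟨x, hx0, hx⟩ := approx_eig' C hCcpt hc0 (fun k => hu1 (φ k)) hdiff
    have h8 : K x = c • J x := by
      have h9 : J (C x) = K x := by rw [hCapp, hJJi]
      rw [hx, map_smul] at h9
      exact h9.symm
    have h11 : K x + (c*μ) • K x = c • x := by
      rw [hJapp, smul_sub, smul_smul] at h8
      exact eq_sub_iff_add_eq.1 h8
    have h10 : (1 + c*μ) • K x = c • x := by
      rw [add_smul, one_smul]
      exact h11
    have hcμ : 1 + c*μ ≠ 0 := by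
      intro h
      rw [h, zero_smul] at h10
      rcases smul_eq_zero.1 h10.symm with h | h
      exacts [hc0 h, hx0 h]
    have heq : K x = (c / (1 + c*μ)) • x := by
      have h12 : ((1 + c*μ)⁻¹ * (1 + c*μ)) • K x = (1 + c*μ)⁻¹ • ((1+c*μ) • K x) :=
        mul_smul _ _ _
      rw [inv_mul_cancel₀ hcμ, one_smul, h10, smul_smul] at h12
      rw [h12, div_eq_inv_mul]
    obtain ⟨i, hi⟩ := hall _ ⟨x, hx0, heq⟩
    have hli0 : lam i ≠ 0 := (hlampos i).ne'
    have hkey : c * (lam i - μ) = 1 := by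
      have h13 := (div_eq_div_iff hcμ hli0).1 hi
      linear_combination h13
    have hgap : δ ≤ |lam i - μ| := by
      rcases le_or_gt i n with h | h
      · have h' : lam i ≤ lam n := hlammono h
        rw [abs_of_neg (by linarith : lam i - μ < 0)]
        calc δ ≤ μ - lam n := min_le_left _ _
          _ ≤ -(lam i - μ) := by linarith
      · have h' : lam (n+1) ≤ lam i := hlammono h
        rw [abs_of_pos (by linarith : 0 < lam i - μ)]
        calc δ ≤ lam (n+1) - μ := min_le_right _ _
          _ ≤ lam i - μ := by linarith
    have habs1 : |c| * |lam i - μ| = 1 := by rw [← abs_mul, hkey, abs_one]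
    have hfin : ‖C‖ * δ ≤ 1 := by
      rw [← hc_eq]
      calc |c| * δ ≤ |c| * |lam i - μ| := mul_le_mul_of_nonneg_left hgap (abs_nonneg c)
        _ = 1 := habs1
    have hCle : ‖C‖ ≤ 1/δ := by
      rw [le_div_iff₀ hδ0]
      exact hfin
    linarith
  -- main construction
  set q : ℝ := r / δ with hqdef
  have hq0 : 0 ≤ q := div_nonneg hr0 hδ0.le
  have hq1 : q < 1 := (div_lt_one hδ0).2 hrδ
  refine ⟨max ((1 - q)⁻¹ * ‖Ji‖) 1, lt_of_lt_of_le one_pos (le_max_right _ _), ?_⟩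
  intro A hAmem
  obtain ⟨hAsym, hAbd⟩ := hA A hAmem
  set S : M →L[ℝ] M := A - μ • 1 with hSdef
  have hSapp : ∀ x, S x = A x - μ • x := fun x => by rw [hSdef]; simp
  have hSsym : ∀ x y, ⟪S x, y⟫ = ⟪x, S y⟫ := by
    intro x y
    rw [hSapp, hSapp, inner_sub_left, inner_sub_right, real_inner_smul_left,
      real_inner_smul_right, hAsym]
  have hSbound : ‖S‖ ≤ r := by
    apply sym_norm_le' S hSsym hr0
    intro x
    obtain ⟨ha, hb⟩ := hAbd x
    have hxx : ⟪x, x⟫ = ‖x‖^2 := real_inner_self_eq_norm_sq x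
    have hs : ⟪S x, x⟫ = ⟪A x, x⟫ - μ * ⟪x, x⟫ := by
      rw [hSapp, inner_sub_left, real_inner_smul_left]
    rw [abs_le]
    constructor
    · rw [hs, hμdef, hrdef]
      nlinarith
    · rw [hs, hμdef, hrdef]
      nlinarith
  set t : M →L[ℝ] M := C * S with htdef
  have htn : ‖t‖ ≤ q := by
    calc ‖t‖ ≤ ‖C‖ * ‖S‖ := norm_mul_le _ _
      _ ≤ (1/δ) * r := mul_le_mul hCnorm hSbound (norm_nonneg _) (by positivity)
      _ = q := by rw [hqdef]; ring
  have htlt : ‖t‖ < 1 := lt_of_le_of_lt htn hq1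
  have hfact : 1 - K * A = J * (1 - t) := by
    have hJC : J * C = K := by
      rw [hCdef, ← mul_assoc, hJJi1, one_mul]
    have h5 : J * (1 - t) = J - K * S := by
      rw [htdef, mul_sub, mul_one, ← mul_assoc, hJC]
    rw [h5, hSdef, mul_sub, mul_smul_comm, mul_one, hJdef]
    abel
  set uU : (M →L[ℝ] M)ˣ := Units.oneSub t htlt with huU
  have huUval : (uU : M →L[ℝ] M) = 1 - t := rfl
  set B : M →L[ℝ] M := ↑uU⁻¹ * Ji with hBdef
  have hBinnorm : ‖(↑uU⁻¹ : M →L[ℝ] M)‖ ≤ (1-q)⁻¹ := by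
    have hval : (↑uU⁻¹ : M →L[ℝ] M) = ∑' m : ℕ, t ^ m := rfl
    rw [hval]
    have hsum : HasSum (fun m : ℕ => q ^ m) (1 - q)⁻¹ := hasSum_geometric_of_lt_one hq0 hq1
    refine tsum_of_norm_bounded hsum fun m => ?_
    calc ‖t ^ m‖ ≤ ‖t‖ ^ m := norm_pow_le t m
      _ ≤ q ^ m := pow_le_pow_left₀ (norm_nonneg _) htn m
  refine ⟨B, ?_, ?_, ?_⟩
  · rw [hfact, hBdef]
    calc ↑uU⁻¹ * Ji * (J * (1 - t)) = ↑uU⁻¹ * (Ji * J * (1 - t)) := by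
          rw [mul_assoc, mul_assoc]
      _ = ↑uU⁻¹ * (1 - t) := by rw [hJiJ1, one_mul]
      _ = ↑uU⁻¹ * ↑uU := by rw [huUval]
      _ = 1 := uU.inv_mul
  · rw [hfact, hBdef]
    calc J * (1 - t) * (↑uU⁻¹ * Ji) = J * ((1 - t) * ↑uU⁻¹ * Ji) := by
          rw [mul_assoc, mul_assoc]
      _ = J * (↑uU * ↑uU⁻¹ * Ji) := by rw [huUval]
      _ = J * Ji := by rw [uU.mul_inv, one_mul]
      _ = 1 := hJJi1
  · refine le_trans ?_ (le_max_left _ _)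
    calc ‖B‖ ≤ ‖(↑uU⁻¹ : M →L[ℝ] M)‖ * ‖Ji‖ := norm_mul_le _ _
      _ ≤ (1-q)⁻¹ * ‖Ji‖ := by
          apply mul_le_mul_of_nonneg_right hBinnorm (norm_nonneg _)
end

section
/- Let f : [0,1]×ℝ²→ℝ be continuous, fix ω ∈ C₀, and define f̂ : [0,1]×ℝ²→ℝ by f̂(t,x,y) = f(t, x + Y_t(ω), y + Y'_t(ω)). Then a function u ∈ C¹₀ satisfies u'(t) + ∫₀ᵗ f(s, u(s), u'(s)) ds = u'(0) + ω(t) for all t ∈ [0,1] if and only if the function z defined by z(t) = u(t) - Y_t(ω) is twice continuously differentiable on [0,1] and satisfies z''(t) + f̂(t, z(t), z'(t)) = 0 for all t ∈ [0,1] with z(0) = z(1) = 0. -/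
open MeasureTheory

/-- `Y'_t(ω) = -∫₀¹ ω(s) ds + ω(t)`. -/
noncomputable def Yw' (ω : ℝ → ℝ) (t : ℝ) : ℝ :=
  -(∫ s in (0:ℝ)..1, ω s) + ω t

/-- The shifted nonlinearity `f̂(t,x,y) = f(t, x + Y_t(ω), y + Y'_t(ω))`. -/
noncomputable def fhat (f : ℝ → ℝ → ℝ → ℝ) (ω : ℝ → ℝ) (t x y : ℝ) : ℝ :=
  f t (x + Yw ω t) (y + Yw' ω t)

/-- FTC on `[0,1]` for functions continuous on `[0,1]`. -/
lemma ftc01 {g : ℝ → ℝ} (hg : ContinuousOn g (Set.Icc 0 1)) {t : ℝ}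
    (ht : t ∈ Set.Icc (0:ℝ) 1) :
    HasDerivWithinAt (fun x => ∫ s in (0:ℝ)..x, g s) (g t) (Set.Icc 0 1) t := by
  set ge : ℝ → ℝ := fun x => g (max 0 (min 1 x)) with hge_def
  have hmem : ∀ x : ℝ, max 0 (min 1 x) ∈ Set.Icc (0:ℝ) 1 := fun x =>
    ⟨le_max_left _ _, max_le zero_le_one (min_le_left _ _)⟩
  have hgec : Continuous ge :=
    hg.comp_continuous (by fun_prop) hmem
  have heq : ∀ x ∈ Set.Icc (0:ℝ) 1, ge x = g x := by
    intro x hx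
    simp [hge_def, min_eq_right hx.2, max_eq_right hx.1]
  have h1 : HasDerivWithinAt (fun x => ∫ s in (0:ℝ)..x, ge s) (ge t) (Set.Icc 0 1) t :=
    (hgec.integral_hasStrictDerivAt 0 t).hasDerivAt.hasDerivWithinAt
  have hI : ∀ x ∈ Set.Icc (0:ℝ) 1, (∫ s in (0:ℝ)..x, g s) = ∫ s in (0:ℝ)..x, ge s := by
    intro x hx
    refine intervalIntegral.integral_congr fun s hs => ?_
    rw [Set.uIcc_of_le hx.1] at hs
    exact (heq s ⟨hs.1, hs.2.trans hx.2⟩).symm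
  have h2 : HasDerivWithinAt (fun x => ∫ s in (0:ℝ)..x, g s) (ge t) (Set.Icc 0 1) t :=
    h1.congr hI (hI t ht)
  rwa [heq t ht] at h2

/-- `Yw` has derivative `Yw'` on `[0,1]`. -/
lemma Yw_hasDeriv {ω : ℝ → ℝ} (hω : ContinuousOn ω (Set.Icc 0 1)) {t : ℝ}
    (ht : t ∈ Set.Icc (0:ℝ) 1) :
    HasDerivWithinAt (Yw ω) (Yw' ω t) (Set.Icc 0 1) t := by
  have h1 : HasDerivWithinAt (fun x : ℝ => -x * (∫ s in (0:ℝ)..1, ω s))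
      (-(∫ s in (0:ℝ)..1, ω s)) (Set.Icc 0 1) t := by
    simpa using (((hasDerivAt_id t).neg.mul_const (∫ s in (0:ℝ)..1, ω s)).hasDerivWithinAt)
  exact h1.add (ftc01 hω ht)

/-- `u` solves the integral equation iff `z = u - Y(ω)` is a `C²`
solution of the boundary value problem `z'' + f̂(t,z,z') = 0`, `z(0)=z(1)=0`. -/
theorem stmt6 (f : ℝ → ℝ → ℝ → ℝ)
    (hf : ContinuousOn (fun p : ℝ × ℝ × ℝ => f p.1 p.2.1 p.2.2)
      (Set.Icc 0 1 ×ˢ (Set.univ : Set (ℝ × ℝ))))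
    (ω : ℝ → ℝ) (hω : ContinuousOn ω (Set.Icc 0 1)) (hω0 : ω 0 = 0)
    (u u' : ℝ → ℝ)
    (hu : ∀ t ∈ Set.Icc (0:ℝ) 1, HasDerivWithinAt u (u' t) (Set.Icc 0 1) t)
    (hu'c : ContinuousOn u' (Set.Icc 0 1))
    (hu0 : u 0 = 0) (hu1 : u 1 = 0) :
    (∀ t ∈ Set.Icc (0:ℝ) 1,
        u' t + ∫ s in (0:ℝ)..t, f s (u s) (u' s) = u' 0 + ω t)
    ↔ (∃ z' z'' : ℝ → ℝ,
        (∀ t ∈ Set.Icc (0:ℝ) 1,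
          HasDerivWithinAt (fun τ => u τ - Yw ω τ) (z' t) (Set.Icc 0 1) t) ∧
        ContinuousOn z' (Set.Icc 0 1) ∧
        (∀ t ∈ Set.Icc (0:ℝ) 1, HasDerivWithinAt z' (z'' t) (Set.Icc 0 1) t) ∧
        ContinuousOn z'' (Set.Icc 0 1) ∧
        (∀ t ∈ Set.Icc (0:ℝ) 1,
          z'' t + fhat f ω t (u t - Yw ω t) (z' t) = 0) ∧
        u 0 - Yw ω 0 = 0 ∧ u 1 - Yw ω 1 = 0) := by
  set C : ℝ := ∫ s in (0:ℝ)..1, ω s with hC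
  have hYw0 : Yw ω 0 = 0 := by simp [Yw]
  have hYw1 : Yw ω 1 = 0 := by simp [Yw]
  have hYw'0 : Yw' ω 0 = -C := by simp [Yw', hω0, hC]
  have huc : ContinuousOn u (Set.Icc 0 1) := fun t ht => (hu t ht).continuousWithinAt
  -- continuity of F t = f t (u t) (u' t)
  set F : ℝ → ℝ := fun t => f t (u t) (u' t) with hF
  have hFc : ContinuousOn F (Set.Icc 0 1) := by
    have : ContinuousOn (fun t : ℝ => (t, u t, u' t)) (Set.Icc 0 1) :=
      (continuousOn_id).prodMk (huc.prodMk hu'c)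
    exact hf.comp this (fun t ht => ⟨ht, trivial⟩)
  have hfhat : ∀ t, fhat f ω t (u t - Yw ω t) (u' t - Yw' ω t) = F t := by
    intro t; simp [fhat, hF]
  constructor
  · intro h
    refine ⟨fun t => u' t - Yw' ω t, fun t => -F t, ?_, ?_, ?_, ?_, ?_, ?_, ?_⟩
    · intro t ht
      exact (hu t ht).sub (Yw_hasDeriv hω ht)
    · exact hu'c.sub ((continuousOn_const).add hω)
    · intro t ht
      have hg : HasDerivWithinAt (fun x : ℝ => u' 0 + C - ∫ s in (0:ℝ)..x, F s)
          (-F t) (Set.Icc 0 1) t := by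
        have h' := (hasDerivWithinAt_const t (Set.Icc (0:ℝ) 1) (u' 0 + C)).sub (ftc01 hFc ht)
        rw [zero_sub] at h'
        exact h'
      have heq : ∀ x ∈ Set.Icc (0:ℝ) 1, u' x - Yw' ω x = u' 0 + C - ∫ s in (0:ℝ)..x, F s := by
        intro x hx
        have := h x hx
        simp only [Yw', hC] at *
        linarith
      exact hg.congr heq (heq t ht)
    · exact hFc.neg
    · intro t ht
      rw [hfhat t]
      ring
    · rw [hu0, hYw0]; ring
    · rw [hu1, hYw1]; ring
  · rintro ⟨z', z'', hz1, _, hz3, _, hode, _, _⟩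
    have hz'eq : ∀ t ∈ Set.Icc (0:ℝ) 1, z' t = u' t - Yw' ω t := by
      intro t ht
      have hd : UniqueDiffWithinAt ℝ (Set.Icc (0:ℝ) 1) t := uniqueDiffOn_Icc zero_lt_one t ht
      have h1 := (hz1 t ht).derivWithin hd
      have h2 := (((hu t ht).sub (Yw_hasDeriv hω ht))).derivWithin hd
      rw [← h1, ← h2]; rfl
    set G : ℝ → ℝ := fun t => z' t + ∫ s in (0:ℝ)..t, F s with hG
    have hGd : ∀ t ∈ Set.Icc (0:ℝ) 1, HasDerivWithinAt G 0 (Set.Icc 0 1) t := by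
      intro t ht
      have := (hz3 t ht).add (ftc01 hFc ht)
      have hval : z'' t + F t = 0 := by
        have h0 := hode t ht
        rw [hz'eq t ht, hfhat t] at h0
        exact h0
      rwa [hval] at this
    have hconst : ∀ t ∈ Set.Icc (0:ℝ) 1, G t = G 0 := by
      refine constant_of_derivWithin_zero (fun x hx => (hGd x hx).differentiableWithinAt) ?_
      intro x hx
      exact (hGd x (Set.mem_Icc_of_Ico hx)).derivWithin (uniqueDiffOn_Icc zero_lt_one x
        (Set.mem_Icc_of_Ico hx))
    intro t ht
    have h0 : (0:ℝ) ∈ Set.Icc (0:ℝ) 1 := ⟨le_refl 0, zero_le_one⟩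
    have := hconst t ht
    rw [hG] at this
    simp only [intervalIntegral.integral_same] at this
    rw [hz'eq t ht, hz'eq 0 h0, hYw'0] at this
    simp only [Yw', hC] at this ⊢
    linarith
end
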